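/- Let T be a global run of an L-DPN that uses locks in a nested style, and let v be a node of T that has both a right child (arising from a transition rule) and a left child (the local initial configuration of a spawned instance). Let as¹ and as² be the acquisition structures of the subtrees of T rooted at the right child and at the left child, respectively. Then as¹ and as² are consistent and Compatible(as¹,as²) holds. -/

import Mathlib

/-!
Common formalization infrastructure for
"Single-indexed LTL model checking for Dynamic Pushdown Networks with locks".
-/

namespace DPNFormal

/-- Actions of an L-DPN: internal action, lock acquisition, lock release. -/
inductive Act (L : Type) : Type
  | tau : Act L
  | acq : L → Act L
  | rel : L → Act L

/-- Transition rules of a DPDS: `simple a p γ p' w` is `pγ ↪ᵃ p'w`,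
`spawn a p γ p' w p₂ w₂` is `pγ ↪ᵃ p'w ▷ p₂w₂`. -/
inductive Rule (P Γ L : Type) : Type
  | simple (a : Act L) (p : P) (γ : Γ) (p' : P) (w : List Γ) : Rule P Γ L
  | spawn (a : Act L) (p : P) (γ : Γ) (p' : P) (w : List Γ) (p₂ : P) (w₂ : List Γ) : Rule P Γ L

/-- A local configuration: control state, stack content, set of held locks. -/
abbrev Conf (P Γ L : Type) := P × List Γ × Set L

/-- A Dynamic Pushdown Network with Locks (L-DPN): `n` DPDSs, each with its
set of control states, its stack alphabet and its set of rules.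
A (lock-free) DPN is the special case `L = Empty` (so all actions are `τ`). -/
structure LDPN (n : ℕ) (P Γ L : Type) where
  states : Fin n → Set P
  alph : Fin n → Set Γ
  rules : Fin n → Set (Rule P Γ L)

/-- Well-formedness of a rule of the `i`-th DPDS: the control locations belong to
`Pᵢ`, the stack symbols to `Γᵢ`, and a spawned configuration belongs to some `Pⱼ × Γⱼ*`. -/
def RuleOk {n P Γ L} (M : LDPN n P Γ L) (i : Fin n) : Rule P Γ L → Prop
  | .simple _ p γ p' w => p ∈ M.states i ∧ p' ∈ M.states i ∧ γ ∈ M.alph i ∧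
      ∀ x ∈ w, x ∈ M.alph i
  | .spawn _ p γ p' w p₂ w₂ => p ∈ M.states i ∧ p' ∈ M.states i ∧ γ ∈ M.alph i ∧
      (∀ x ∈ w, x ∈ M.alph i) ∧ ∃ j, p₂ ∈ M.states j ∧ ∀ x ∈ w₂, x ∈ M.alph j

/-- Well-formedness of an L-DPN: all components are finite, the control-state sets
are pairwise disjoint, and all rules are well-formed. -/
structure LDPN.WF {n P Γ L} (M : LDPN n P Γ L) : Prop where
  states_fin : ∀ i, (M.states i).Finite
  alph_fin : ∀ i, (M.alph i).Finite
  rules_fin : ∀ i, (M.rules i).Finite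
  disj : ∀ i j, i ≠ j → Disjoint (M.states i) (M.states j)
  rules_ok : ∀ i, ∀ ru ∈ M.rules i, RuleOk M i ru

/-- The set `D_I` of Dynamically Created Local Initial Configurations (DCLICs). -/
def LDPN.DCLICs {n P Γ L} (M : LDPN n P Γ L) : Set (Conf P Γ L) :=
  {c | ∃ i a p γ p' w p₂ w₂, Rule.spawn a p γ p' w p₂ w₂ ∈ M.rules i ∧
        c = (p₂, w₂, (∅ : Set L))}

/-! ### Global runs as (growing) binary trees -/

/-- Finite binary trees whose nodes are labelled by local configurations;
a node has either no child (a leaf), only a right child, or both children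
(left child = newly spawned instance). -/
inductive GTree (C : Type) : Type
  | leaf (c : C) : GTree C
  | node1 (c : C) (right : GTree C) : GTree C
  | node2 (c : C) (left : GTree C) (right : GTree C) : GTree C

/-- The multiset of leaves of a tree: the current global configuration. -/
def GTree.leaves {C} : GTree C → Multiset C
  | .leaf c => {c}
  | .node1 _ t => t.leaves
  | .node2 _ tl tr => tl.leaves + tr.leaves

/-- The label of the root. -/
def GTree.rootLabel {C} : GTree C → C
  | .leaf c => c
  | .node1 c _ => c
  | .node2 c _ _ => c

/-- The label of the node at a given position (positions are lists of directions
from the root; `true` = right child, `false` = left child). -/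
def GTree.label? {C} : GTree C → List Bool → Option C
  | t, [] => some t.rootLabel
  | .leaf _, _ :: _ => none
  | .node1 _ t, true :: pos => t.label? pos
  | .node1 _ _, false :: _ => none
  | .node2 _ _ tr, true :: pos => tr.label? pos
  | .node2 _ tl _, false :: pos => tl.label? pos

/-- A lock `l` is free in the tree `t` if no current instance holds it. -/
def freeIn {P Γ L} (t : GTree (Conf P Γ L)) (l : L) : Prop :=
  ∀ c ∈ t.leaves, l ∉ c.2.2

/-- One expansion step of a global run: exactly one leaf of the tree gets its
children, according to a transition rule of `M`; `freeL` is the availability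
predicate for lock acquisitions, `pos` records the position of the expanded leaf
and `a` the action of the rule used. -/
inductive ExpandA {n P Γ L} (M : LDPN n P Γ L) (freeL : L → Prop) :
    GTree (Conf P Γ L) → GTree (Conf P Γ L) → List Bool → Act L → Prop
  | simple_tau {i : Fin n} {p p' : P} {γ : Γ} {w u : List Γ} {Lk : Set L} :
      Rule.simple Act.tau p γ p' w ∈ M.rules i →
      ExpandA M freeL (.leaf (p, γ :: u, Lk))
        (.node1 (p, γ :: u, Lk) (.leaf (p', w ++ u, Lk))) [] Act.tau
  | simple_acq {i : Fin n} {p p' : P} {γ : Γ} {w u : List Γ} {Lk : Set L} {l : L} :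
      Rule.simple (Act.acq l) p γ p' w ∈ M.rules i → freeL l →
      ExpandA M freeL (.leaf (p, γ :: u, Lk))
        (.node1 (p, γ :: u, Lk) (.leaf (p', w ++ u, Lk ∪ {l}))) [] (Act.acq l)
  | simple_rel {i : Fin n} {p p' : P} {γ : Γ} {w u : List Γ} {Lk : Set L} {l : L} :
      Rule.simple (Act.rel l) p γ p' w ∈ M.rules i → l ∈ Lk →
      ExpandA M freeL (.leaf (p, γ :: u, Lk))
        (.node1 (p, γ :: u, Lk) (.leaf (p', w ++ u, Lk \ {l}))) [] (Act.rel l)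
  | spawn_tau {i : Fin n} {p p' p₂ : P} {γ : Γ} {w u w₂ : List Γ} {Lk : Set L} :
      Rule.spawn Act.tau p γ p' w p₂ w₂ ∈ M.rules i →
      ExpandA M freeL (.leaf (p, γ :: u, Lk))
        (.node2 (p, γ :: u, Lk) (.leaf (p₂, w₂, (∅ : Set L)))
          (.leaf (p', w ++ u, Lk))) [] Act.tau
  | spawn_acq {i : Fin n} {p p' p₂ : P} {γ : Γ} {w u w₂ : List Γ} {Lk : Set L} {l : L} :
      Rule.spawn (Act.acq l) p γ p' w p₂ w₂ ∈ M.rules i → freeL l →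
      ExpandA M freeL (.leaf (p, γ :: u, Lk))
        (.node2 (p, γ :: u, Lk) (.leaf (p₂, w₂, (∅ : Set L)))
          (.leaf (p', w ++ u, Lk ∪ {l}))) [] (Act.acq l)
  | spawn_rel {i : Fin n} {p p' p₂ : P} {γ : Γ} {w u w₂ : List Γ} {Lk : Set L} {l : L} :
      Rule.spawn (Act.rel l) p γ p' w p₂ w₂ ∈ M.rules i → l ∈ Lk →
      ExpandA M freeL (.leaf (p, γ :: u, Lk))
        (.node2 (p, γ :: u, Lk) (.leaf (p₂, w₂, (∅ : Set L)))
          (.leaf (p', w ++ u, Lk \ {l}))) [] (Act.rel l)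
  | in_node1 {c t t' pos a} :
      ExpandA M freeL t t' pos a →
      ExpandA M freeL (.node1 c t) (.node1 c t') (true :: pos) a
  | in_node2_left {c tl tl' tr pos a} :
      ExpandA M freeL tl tl' pos a →
      ExpandA M freeL (.node2 c tl tr) (.node2 c tl' tr) (false :: pos) a
  | in_node2_right {c tl tr tr' pos a} :
      ExpandA M freeL tr tr' pos a →
      ExpandA M freeL (.node2 c tl tr) (.node2 c tl tr') (true :: pos) a

/-- A global run of `M` from the initial global configuration `{c₀}`:
an increasing sequence of finite trees, starting with the single root `c₀`,
where at each instant the tree either stays unchanged or one leaf is expanded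
(a lock may be acquired only if it is free in the whole current tree). -/
structure GlobalRun {n P Γ L} (M : LDPN n P Γ L) (c₀ : Conf P Γ L) where
  tr : ℕ → GTree (Conf P Γ L)
  init : tr 0 = .leaf c₀
  step : ∀ k, tr (k + 1) = tr k ∨
    ∃ pos a, ExpandA M (freeIn (tr k)) (tr k) (tr (k + 1)) pos a

/-- The event at time `k` of a global run: the leaf at position `pos` is expanded
using a rule with action `a` when passing from `tr k` to `tr (k+1)`. -/
def EventAt {n P Γ L} {M : LDPN n P Γ L} {c₀ : Conf P Γ L} (r : GlobalRun M c₀)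
    (k : ℕ) (pos : List Bool) (a : Act L) : Prop :=
  ExpandA M (freeIn (r.tr k)) (r.tr k) (r.tr (k + 1)) pos a

/-- Some event happens at position `pos` with action `a` at some time. -/
def EventAtPos {n P Γ L} {M : LDPN n P Γ L} {c₀ : Conf P Γ L} (r : GlobalRun M c₀)
    (pos : List Bool) (a : Act L) : Prop :=
  ∃ k, EventAt r k pos a

/-- The node at position `pos` eventually carries label `c`. -/
def InTree {n P Γ L} {M : LDPN n P Γ L} {c₀ : Conf P Γ L} (r : GlobalRun M c₀)
    (pos : List Bool) (c : Conf P Γ L) : Prop :=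
  ∃ k, (r.tr k).label? pos = some c

/-- `m`-th position of the local run (rightmost path) starting at `q`. -/
def locpos (q : List Bool) (m : ℕ) : List Bool :=
  q ++ List.replicate m true

/-- Positions at which a local run starts: the root, or a left child
(the local initial configuration of a dynamically created instance). -/
def LocalStartPos (q : List Bool) : Prop :=
  q = [] ∨ ∃ q', q = q' ++ [false]

/-! ### Nested lock usage -/

/-- The local run starting at `q` uses locks in a nested style: there is a stack
discipline on the lock actions of this local run, i.e. every release releases the
latest acquired lock that has not yet been released. -/
def NestedLocal {n P Γ L} {M : LDPN n P Γ L} {c₀ : Conf P Γ L}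
    (r : GlobalRun M c₀) (q : List Bool) : Prop :=
  ∃ st : ℕ → List L,
    (∀ m l, EventAtPos r (locpos q m) (Act.acq l) → st (m + 1) = l :: st m) ∧
    (∀ m l, EventAtPos r (locpos q m) (Act.rel l) → st m = l :: st (m + 1)) ∧
    (∀ m, EventAtPos r (locpos q m) Act.tau → st (m + 1) = st m)

/-- A global run uses locks in a nested style iff every local run does. -/
def NestedRun {n P Γ L} {M : LDPN n P Γ L} {c₀ : Conf P Γ L} (r : GlobalRun M c₀) : Prop :=
  ∀ q, LocalStartPos q → NestedLocal r q

/-! ### LTL -/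

/-- LTL formulas. -/
inductive LTL (AP : Type) : Type
  | atom (a : AP) : LTL AP
  | neg (φ : LTL AP) : LTL AP
  | conj (φ ψ : LTL AP) : LTL AP
  | next (φ : LTL AP) : LTL AP
  | untl (φ ψ : LTL AP) : LTL AP

/-- Size of an LTL formula. -/
def LTL.size {AP} : LTL AP → ℕ
  | .atom _ => 1
  | .neg φ => φ.size + 1
  | .conj φ ψ => φ.size + ψ.size + 1
  | .next φ => φ.size + 1
  | .untl φ ψ => φ.size + ψ.size + 1

/-- Suffix of an ω-word. -/
def wshift {AP} (σ : ℕ → Set AP) (k : ℕ) : ℕ → Set AP := fun m => σ (m + k)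

/-- Satisfaction of an LTL formula by an ω-word over `2^AP`. -/
def LTL.Sat {AP} (σ : ℕ → Set AP) : LTL AP → Prop
  | .atom a => a ∈ σ 0
  | .neg φ => ¬ LTL.Sat σ φ
  | .conj φ ψ => LTL.Sat σ φ ∧ LTL.Sat σ ψ
  | .next φ => LTL.Sat (wshift σ 1) φ
  | .untl φ ψ => ∃ k, LTL.Sat (wshift σ k) ψ ∧ ∀ j, 1 ≤ j → j < k → LTL.Sat (wshift σ j) φ

/-- The global run `r` satisfies the single-indexed formula `f = ⋀ᵢ fᵢ`
w.r.t. the valuation `lam`: every local run of every instance of `Pᵢ` occurring in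
the run is infinite and its induced ω-word satisfies `fᵢ`. -/
def SatGlobal {n AP P Γ L} {M : LDPN n P Γ L} {c₀ : Conf P Γ L} (r : GlobalRun M c₀)
    (lam : AP → Set (Conf P Γ L)) (f : Fin n → LTL AP) : Prop :=
  ∀ q, LocalStartPos q → (∃ c, InTree r q c) →
    ∃ ρ : ℕ → Conf P Γ L,
      (∀ m, InTree r (locpos q m) (ρ m)) ∧
      ∀ i, (ρ 0).1 ∈ M.states i →
        LTL.Sat (fun m => {ap | ρ m ∈ lam ap}) (f i)

/-- The initial global configuration `{c₀}` satisfies `f`: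
`M` has a global run from `{c₀}` satisfying `f`. -/
def SatFrom {n AP P Γ L} (M : LDPN n P Γ L) (c₀ : Conf P Γ L)
    (lam : AP → Set (Conf P Γ L)) (f : Fin n → LTL AP) : Prop :=
  ∃ r : GlobalRun M c₀, SatGlobal r lam f

/-- The initial global configuration `{c₀}` satisfies `f` via a global run
that uses locks in a nested style. -/
def SatNested {n AP P Γ L} (M : LDPN n P Γ L) (c₀ : Conf P Γ L)
    (lam : AP → Set (Conf P Γ L)) (f : Fin n → LTL AP) : Prop :=
  ∃ r : GlobalRun M c₀, NestedRun r ∧ SatGlobal r lam f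

/-- A simple valuation: whether a local configuration satisfies an atomic
proposition depends only on its control location and its held locks. -/
def SimpleVal {AP P Γ L} (lam : AP → Set (Conf P Γ L)) : Prop :=
  ∀ ap (p : P) (w w' : List Γ) (Lk : Set L), (p, w, Lk) ∈ lam ap ↔ (p, w', Lk) ∈ lam ap

/-! ### Multi-automata -/

/-- An (L-)Multi-automaton with state space `Q`: the initial states are (the images
of) the elements of `S` (control locations, possibly paired with lock sets or
acquisition structures), and each transition is labelled by a stack symbol and a
set of DCLICs (elements of `Dc`). -/
structure MA (S Γ Dc Q : Type) where
  embed : S → Q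
  trans : Q → Γ → Set Dc → Q → Prop
  acc : Set Q

/-- The reachability relation of a multi-automaton, collecting the union of the
DCLIC-sets labelling the transitions used. -/
inductive MA.Steps {S Γ Dc Q} (A : MA S Γ Dc Q) : Q → List Γ → Set Dc → Q → Prop
  | nil (q : Q) : MA.Steps A q [] ∅ q
  | cons {q : Q} {γ : Γ} {D₁ : Set Dc} {q₁ : Q} {w : List Γ} {D₂ : Set Dc} {q₂ : Q} :
      A.trans q γ D₁ q₁ → MA.Steps A q₁ w D₂ q₂ → MA.Steps A q (γ :: w) (D₁ ∪ D₂) q₂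

/-- The language of a multi-automaton: triples `(p, ω, D)` such that from the
initial state for `p` some accepting state is reached reading `ω` while
collecting `D`. -/
def MA.Lang {S Γ Dc Q} (A : MA S Γ Dc Q) : Set (S × List Γ × Set Dc) :=
  {x | ∃ qf ∈ A.acc, A.Steps (A.embed x.1) x.2.1 x.2.2 qf}

/-- The set of transitions of a multi-automaton. -/
def MA.transSet {S Γ Dc Q} (A : MA S Γ Dc Q) : Set (Q × Γ × Set Dc × Q) :=
  {x | A.trans x.1 x.2.1 x.2.2.1 x.2.2.2}

/-- The family `Av` of (L-)multi-automata represents the valuation `lam`: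
a local configuration `(pω, L)` satisfies `ap` iff `((p,L), ω, ∅)` is accepted
by `Av ap`.  (A regular valuation is one representable in this way.) -/
def RegularVal {AP P Γ L} (Qv : Type) (Av : AP → MA (P × Set L) Γ (Conf P Γ L) Qv)
    (lam : AP → Set (Conf P Γ L)) : Prop :=
  ∀ ap (p : P) (w : List Γ) (Lk : Set L),
    (p, w, Lk) ∈ lam ap ↔ ((p, Lk), w, (∅ : Set (Conf P Γ L))) ∈ (Av ap).Lang

/-- `D_fp`: the set of DCLICs of the DPN `M` whose singleton initial global
configuration satisfies `f`. -/
def DfpSet {n AP P Γ} (M : LDPN n P Γ Empty) (lam : AP → Set (Conf P Γ Empty))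
    (f : Fin n → LTL AP) : Set (Conf P Γ Empty) :=
  {c | c ∈ M.DCLICs ∧ SatFrom M c lam f}

/-! ### Acquisition structures -/

/-- An acquisition structure `(R, RH, U, AH, A, X)`. -/
structure AcqStruct (L : Type) where
  R : Set L
  RH : Set (L × L)
  U : Set L
  AH : Set (L × L)
  A : Set L
  X : Set L

/-- Acyclicity of a directed graph on `L`. -/
def RelAcyclic {L : Type} (E : Set (L × L)) : Prop :=
  ∀ l, ¬ Relation.TransGen (fun x y => (x, y) ∈ E) l l

/-- Consistency of an acquisition structure: both graphs are acyclic and the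
held-throughout locks are neither used nor finally acquired. -/
def ASConsistent {L} (as : AcqStruct L) : Prop :=
  RelAcyclic as.RH ∧ RelAcyclic as.AH ∧ (as.X \ as.R) ∩ (as.U ∪ as.A) = ∅

/-- Compatibility of two consistent acquisition structures. -/
def ASCompatible {L} (a b : AcqStruct L) : Prop :=
  a.X ∩ b.X = ∅ ∧
  (a.A ∪ (a.X \ a.R)) ∩ (b.A ∪ (b.X \ b.R)) = ∅ ∧
  RelAcyclic (a.RH ∪ b.RH) ∧
  RelAcyclic (a.AH ∪ b.AH) ∧
  (a.A ∪ a.U) ∩ (b.X \ b.R) = ∅ ∧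
  (b.A ∪ b.U) ∩ (a.X \ a.R) = ∅

/-- Componentwise union of acquisition structures. -/
def asUnion {L} (a b : AcqStruct L) : AcqStruct L :=
  ⟨a.R ∪ b.R, a.RH ∪ b.RH, a.U ∪ b.U, a.AH ∪ b.AH, a.A ∪ b.A, a.X ∪ b.X⟩

/-- Acquisition structures form a finite type when `L` is finite. -/
def acqStructEquiv (L : Type) :
    AcqStruct L ≃ Set L × Set (L × L) × Set L × Set (L × L) × Set L × Set L where
  toFun as := (as.R, as.RH, as.U, as.AH, as.A, as.X)
  invFun x := ⟨x.1, x.2.1, x.2.2.1, x.2.2.2.1, x.2.2.2.2.1, x.2.2.2.2.2⟩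
  left_inv _ := rfl
  right_inv _ := rfl

instance {L : Type} [Finite L] : Finite (AcqStruct L) :=
  Finite.of_equiv _ (acqStructEquiv L).symm

/-- The update of an acquisition structure determined by the action of a rule:
`ASUpd a as' as` holds iff applying a rule with action `a` whose successor
acquisition structure is `as'` yields the acquisition structure `as`
(including the side conditions on `a`). -/
def ASUpd {L} : Act L → AcqStruct L → AcqStruct L → Prop
  | .tau, as', as => as = as'
  | .rel l, as', as =>
      l ∉ as'.X ∪ as'.R ∧
      as = ⟨as'.R ∪ {l}, as'.RH, as'.U, as'.AH, as'.A, as'.X ∪ {l}⟩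
  | .acq l, as', as =>
      (l ∈ as'.R ∩ as'.X ∧
        as = ⟨as'.R \ {l},
              (as'.RH \ (Set.univ ×ˢ {l})) ∪ ({l} ×ˢ (as'.R \ {l})),
              as'.U ∪ {l}, as'.AH, as'.A, as'.X \ {l}⟩) ∨
      (¬ (l ∈ as'.R ∩ as'.X) ∧ l ∉ as'.A ∧ l ∈ as'.X ∧
        as = ⟨as'.R, as'.RH, as'.U,
              as'.AH ∪ ({l} ×ˢ as'.U), as'.A ∪ {l}, as'.X \ {l}⟩)

/-- Lifting of an original rule (together with acquisition structures
`as`, `as'`, `as''`) to a rule of the product DPN. -/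
def liftRule {P Γ L} : Rule P Γ L → AcqStruct L → AcqStruct L → AcqStruct L →
    Rule (P × AcqStruct L) Γ Empty
  | .simple _ p γ p' w, as, as', _ => .simple Act.tau (p, as) γ (p', as') w
  | .spawn _ p γ p' w p₂ w₂, as, as', as'' =>
      .spawn Act.tau (p, as) γ (p', as') w (p₂, as'') w₂

/-- The side conditions under which a rule of the product DPN is generated
from an original rule and acquisition structures `as`, `as'`, `as''`. -/
def prodCond {P Γ L} : Rule P Γ L → AcqStruct L → AcqStruct L → AcqStruct L → Prop
  | .simple a _ _ _ _, as, as', _ =>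
      ASConsistent as ∧ ASConsistent as' ∧ ASUpd a as' as
  | .spawn a _ _ _ _ _ _, as, as', as'' =>
      ASConsistent as ∧ ASConsistent as' ∧ ASConsistent as'' ∧
      ASCompatible as' as'' ∧ as''.R = ∅ ∧ as''.X = ∅ ∧
      ASUpd a (asUnion as' as'') as

/-- The product DPN `M'` of an L-DPN `M` with the consistent acquisition
structures: control locations are pairs `(p, as)` with `as` consistent, and the
rules are those of `M` with the acquisition structures updated accordingly. -/
def productLDPN {n P Γ L} (M : LDPN n P Γ L) : LDPN n (P × AcqStruct L) Γ Empty where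
  states i := {q | q.1 ∈ M.states i ∧ ASConsistent q.2}
  alph i := M.alph i
  rules i := {ru | ∃ r₀ ∈ M.rules i, ∃ as as' as'',
    prodCond r₀ as as' as'' ∧ ru = liftRule r₀ as as' as''}

/-- Lifting of a valuation of the L-DPN to a valuation of the product DPN:
`(p, as)ω ∈ λ'(ap)` iff `(pω, as_X) ∈ λ(ap)`. -/
def liftVal {AP P Γ L} (lam : AP → Set (Conf P Γ L)) :
    AP → Set (Conf (P × AcqStruct L) Γ Empty) :=
  fun ap => {c | (c.1.1, c.2.1, c.1.2.X) ∈ lam ap}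

/-! ### The acquisition structure of a subtree of a global run -/

/-- Start positions of the local-run segments lying in the subtree rooted at `v`:
`v` itself, and the left children below `v`. -/
def LocalStartIn (v q : List Bool) : Prop :=
  q = v ∨ (v <+: q ∧ ∃ q', q = q' ++ [false])

/-- An initial release: a release of `l` at step `m` of the local run starting
at `q`, with no earlier acquisition of `l` in the same local run. -/
def InitRelAt {n P Γ L} {M : LDPN n P Γ L} {c₀ : Conf P Γ L} (r : GlobalRun M c₀)
    (q : List Bool) (k m : ℕ) (l : L) : Prop :=
  EventAt r k (locpos q m) (Act.rel l) ∧
  ∀ m' < m, ¬ EventAtPos r (locpos q m') (Act.acq l)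

/-- A final acquisition: an acquisition of `l` at step `m` of the local run
starting at `q`, with no later release of `l` in the same local run. -/
def FinAcqAt {n P Γ L} {M : LDPN n P Γ L} {c₀ : Conf P Γ L} (r : GlobalRun M c₀)
    (q : List Bool) (k m : ℕ) (l : L) : Prop :=
  EventAt r k (locpos q m) (Act.acq l) ∧
  ∀ m', m < m' → ¬ EventAtPos r (locpos q m') (Act.rel l)

/-- A usage of `l`: an acquisition or release of `l` that is neither a final
acquisition nor an initial release. -/
def UsageAt {n P Γ L} {M : LDPN n P Γ L} {c₀ : Conf P Γ L} (r : GlobalRun M c₀)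
    (q : List Bool) (k m : ℕ) (l : L) : Prop :=
  (EventAt r k (locpos q m) (Act.acq l) ∧ ¬ FinAcqAt r q k m l) ∨
  (EventAt r k (locpos q m) (Act.rel l) ∧ ¬ InitRelAt r q k m l)

/-- The acquisition structure of the subtree of the global run `r` rooted at
position `v`. -/
def acqStructOf {n P Γ L} {M : LDPN n P Γ L} {c₀ : Conf P Γ L} (r : GlobalRun M c₀)
    (v : List Bool) : AcqStruct L where
  R := {l | ∃ q k m, LocalStartIn v q ∧ InitRelAt r q k m l}
  RH := {lp | ∃ q k m, LocalStartIn v q ∧ InitRelAt r q k m lp.2 ∧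
          ∃ q₂ k₂ m₂, LocalStartIn v q₂ ∧ k₂ < k ∧ UsageAt r q₂ k₂ m₂ lp.1}
  U := {l | ∃ q k m, LocalStartIn v q ∧ UsageAt r q k m l}
  AH := {lp | ∃ q k m, LocalStartIn v q ∧ FinAcqAt r q k m lp.1 ∧
          ∃ q₂ k₂ m₂, LocalStartIn v q₂ ∧ k < k₂ ∧ UsageAt r q₂ k₂ m₂ lp.2}
  A := {l | ∃ q k m, LocalStartIn v q ∧ FinAcqAt r q k m l}
  X := {l | ∃ c, InTree r v c ∧ l ∈ c.2.2}


/-! ### Auxiliary infrastructure for the proof -/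

/-- The lock-set update performed by an action. -/
def lockstep {L : Type} : Act L → Set L → Set L
  | .tau, s => s
  | .acq l, s => s ∪ {l}
  | .rel l, s => s \ {l}

/-- The leaf (if any) at a given position. -/
def GTree.leafAt {C : Type} : GTree C → List Bool → Option C
  | .leaf c, [] => some c
  | .leaf _, _ :: _ => none
  | .node1 _ _, [] => none
  | .node1 _ t, true :: p => t.leafAt p
  | .node1 _ _, false :: _ => none
  | .node2 _ _ _, [] => none
  | .node2 _ _ t, true :: p => t.leafAt p
  | .node2 _ t _, false :: p => t.leafAt p

lemma leafAt_leaf {C : Type} {c d : C} {p : List Bool} :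
    (GTree.leaf c).leafAt p = some d ↔ p = [] ∧ d = c := by
  cases p with
  | nil => simp [GTree.leafAt, eq_comm]
  | cons b p => simp [GTree.leafAt]

lemma label?_leaf {C : Type} {c d : C} {p : List Bool} :
    (GTree.leaf c).label? p = some d ↔ p = [] ∧ d = c := by
  cases p with
  | nil => simp [GTree.label?, GTree.rootLabel, eq_comm]
  | cons b p => cases b <;> simp [GTree.label?]

lemma leafAt_label {C : Type} {t : GTree C} {p : List Bool} {c : C}
    (h : t.leafAt p = some c) : t.label? p = some c := by
  induction t generalizing p with
  | leaf d => rw [leafAt_leaf] at h; rw [h.1, h.2]; rfl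
  | node1 d t ih =>
      cases p with
      | nil => simp [GTree.leafAt] at h
      | cons b p => cases b <;> simp_all [GTree.leafAt, GTree.label?]
  | node2 d tl tr ihl ihr =>
      cases p with
      | nil => simp [GTree.leafAt] at h
      | cons b p => cases b <;> simp_all [GTree.leafAt, GTree.label?]

lemma leafAt_no_below {C : Type} {t : GTree C} {p : List Bool} {c : C}
    (h : t.leafAt p = some c) (q : List Bool) (hq : q ≠ []) :
    t.label? (p ++ q) = none := by
  induction t generalizing p with
  | leaf d =>
      rw [leafAt_leaf] at h
      obtain ⟨rfl, rfl⟩ := h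
      cases q with
      | nil => exact absurd rfl hq
      | cons b q => cases b <;> rfl
  | node1 d t ih =>
      cases p with
      | nil => simp [GTree.leafAt] at h
      | cons b p => cases b <;> simp_all [GTree.leafAt, GTree.label?]
  | node2 d tl tr ihl ihr =>
      cases p with
      | nil => simp [GTree.leafAt] at h
      | cons b p => cases b <;> simp_all [GTree.leafAt, GTree.label?]

lemma label?_prefix {C : Type} {t : GTree C} {p q : List Bool} {c : C}
    (h : t.label? (p ++ q) = some c) : ∃ d, t.label? p = some d := by
  induction t generalizing p with
  | leaf d =>
      rw [label?_leaf] at h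
      rcases List.append_eq_nil_iff.mp h.1 with ⟨rfl, rfl⟩
      exact ⟨d, rfl⟩
  | node1 d t ih =>
      cases p with
      | nil => exact ⟨d, rfl⟩
      | cons b p =>
          cases b <;> simp_all [GTree.label?]
  | node2 d tl tr ihl ihr =>
      cases p with
      | nil => exact ⟨d, rfl⟩
      | cons b p => cases b <;> simp_all [GTree.label?]

lemma mem_leaves_iff {C : Type} {t : GTree C} {c : C} :
    c ∈ t.leaves ↔ ∃ p, t.leafAt p = some c := by
  induction t with
  | leaf d =>
      simp only [GTree.leaves, Multiset.mem_singleton]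
      constructor
      · rintro rfl; exact ⟨[], rfl⟩
      · rintro ⟨p, hp⟩; rw [leafAt_leaf] at hp; exact hp.2
  | node1 d t ih =>
      simp only [GTree.leaves, ih]
      constructor
      · rintro ⟨p, hp⟩; exact ⟨true :: p, hp⟩
      · rintro ⟨p, hp⟩
        cases p with
        | nil => simp [GTree.leafAt] at hp
        | cons b p =>
            cases b
            · simp [GTree.leafAt] at hp
            · exact ⟨p, hp⟩
  | node2 d tl tr ihl ihr =>
      simp only [GTree.leaves, Multiset.mem_add, ihl, ihr]
      constructor
      · rintro (⟨p, hp⟩ | ⟨p, hp⟩)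
        · exact ⟨false :: p, hp⟩
        · exact ⟨true :: p, hp⟩
      · rintro ⟨p, hp⟩
        cases p with
        | nil => simp [GTree.leafAt] at hp
        | cons b p =>
            cases b
            · exact Or.inl ⟨p, hp⟩
            · exact Or.inr ⟨p, hp⟩
section ExpandLemmas

variable {n : ℕ} {P Γ L : Type} {M : LDPN n P Γ L} {f : L → Prop}

lemma expand_core {t t' : GTree (Conf P Γ L)} {pos : List Bool} {a : Act L}
    (h : ExpandA M f t t' pos a) :
    ∃ c c' : Conf P Γ L, t.leafAt pos = some c ∧
      t'.leafAt (pos ++ [true]) = some c' ∧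
      c'.2.2 = lockstep a c.2.2 ∧
      (∀ l, a = Act.acq l → f l) ∧ (∀ l, a = Act.rel l → l ∈ c.2.2) := by
  induction h with
  | simple_tau h => exact ⟨_, _, rfl, rfl, rfl, by simp, by simp⟩
  | simple_acq h hf =>
      exact ⟨_, _, rfl, rfl, rfl, by rintro l' h'; cases h'; exact hf, by simp⟩
  | simple_rel h hl =>
      exact ⟨_, _, rfl, rfl, rfl, by simp, by rintro l' h'; cases h'; exact hl⟩
  | spawn_tau h => exact ⟨_, _, rfl, rfl, rfl, by simp, by simp⟩
  | spawn_acq h hf =>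
      exact ⟨_, _, rfl, rfl, rfl, by rintro l' h'; cases h'; exact hf, by simp⟩
  | spawn_rel h hl =>
      exact ⟨_, _, rfl, rfl, rfl, by simp, by rintro l' h'; cases h'; exact hl⟩
  | in_node1 h ih => exact ih
  | in_node2_left h ih => exact ih
  | in_node2_right h ih => exact ih

lemma expand_preserve {t t' : GTree (Conf P Γ L)} {pos : List Bool} {a : Act L}
    (h : ExpandA M f t t' pos a) :
    ∀ pos' d, pos' ≠ pos → t.leafAt pos' = some d → t'.leafAt pos' = some d := by
  induction h with
  | simple_tau h => intro pos' d hne hd; rw [leafAt_leaf] at hd; exact absurd hd.1 hne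
  | simple_acq h hf => intro pos' d hne hd; rw [leafAt_leaf] at hd; exact absurd hd.1 hne
  | simple_rel h hl => intro pos' d hne hd; rw [leafAt_leaf] at hd; exact absurd hd.1 hne
  | spawn_tau h => intro pos' d hne hd; rw [leafAt_leaf] at hd; exact absurd hd.1 hne
  | spawn_acq h hf => intro pos' d hne hd; rw [leafAt_leaf] at hd; exact absurd hd.1 hne
  | spawn_rel h hl => intro pos' d hne hd; rw [leafAt_leaf] at hd; exact absurd hd.1 hne
  | @in_node1 c t t' pos a h ih =>
      intro pos' d hne hd
      cases pos' with
      | nil => simp [GTree.leafAt] at hd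
      | cons b p =>
          cases b
          · simp [GTree.leafAt] at hd
          · exact ih p d (by simpa using hne) hd
  | @in_node2_left c tl tl' tr pos a h ih =>
      intro pos' d hne hd
      cases pos' with
      | nil => simp [GTree.leafAt] at hd
      | cons b p =>
          cases b
          · exact ih p d (by simpa using hne) hd
          · exact hd
  | @in_node2_right c tl tr tr' pos a h ih =>
      intro pos' d hne hd
      cases pos' with
      | nil => simp [GTree.leafAt] at hd
      | cons b p =>
          cases b
          · exact hd
          · exact ih p d (by simpa using hne) hd

lemma expand_back {t t' : GTree (Conf P Γ L)} {pos : List Bool} {a : Act L}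
    (h : ExpandA M f t t' pos a) :
    ∀ pos' d, t'.leafAt pos' = some d →
      (pos' ≠ pos ∧ t.leafAt pos' = some d) ∨ pos' = pos ++ [true] ∨
      (pos' = pos ++ [false] ∧ d.2.2 = ∅) := by
  induction h with
  | simple_tau h =>
      intro pos' d hd
      cases pos' with
      | nil => simp [GTree.leafAt] at hd
      | cons b p =>
          cases b
          · simp [GTree.leafAt] at hd
          · simp only [GTree.leafAt] at hd
            rw [leafAt_leaf] at hd; exact Or.inr (Or.inl (by simp [hd.1]))
  | simple_acq h hf =>
      intro pos' d hd
      cases pos' with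
      | nil => simp [GTree.leafAt] at hd
      | cons b p =>
          cases b
          · simp [GTree.leafAt] at hd
          · simp only [GTree.leafAt] at hd
            rw [leafAt_leaf] at hd; exact Or.inr (Or.inl (by simp [hd.1]))
  | simple_rel h hl =>
      intro pos' d hd
      cases pos' with
      | nil => simp [GTree.leafAt] at hd
      | cons b p =>
          cases b
          · simp [GTree.leafAt] at hd
          · simp only [GTree.leafAt] at hd
            rw [leafAt_leaf] at hd; exact Or.inr (Or.inl (by simp [hd.1]))
  | spawn_tau h =>
      intro pos' d hd
      cases pos' with
      | nil => simp [GTree.leafAt] at hd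
      | cons b p =>
          cases b
          · simp only [GTree.leafAt] at hd
            rw [leafAt_leaf] at hd
            exact Or.inr (Or.inr ⟨by simp [hd.1], by rw [hd.2]⟩)
          · simp only [GTree.leafAt] at hd
            rw [leafAt_leaf] at hd; exact Or.inr (Or.inl (by simp [hd.1]))
  | spawn_acq h hf =>
      intro pos' d hd
      cases pos' with
      | nil => simp [GTree.leafAt] at hd
      | cons b p =>
          cases b
          · simp only [GTree.leafAt] at hd
            rw [leafAt_leaf] at hd
            exact Or.inr (Or.inr ⟨by simp [hd.1], by rw [hd.2]⟩)
          · simp only [GTree.leafAt] at hd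
            rw [leafAt_leaf] at hd; exact Or.inr (Or.inl (by simp [hd.1]))
  | spawn_rel h hl =>
      intro pos' d hd
      cases pos' with
      | nil => simp [GTree.leafAt] at hd
      | cons b p =>
          cases b
          · simp only [GTree.leafAt] at hd
            rw [leafAt_leaf] at hd
            exact Or.inr (Or.inr ⟨by simp [hd.1], by rw [hd.2]⟩)
          · simp only [GTree.leafAt] at hd
            rw [leafAt_leaf] at hd; exact Or.inr (Or.inl (by simp [hd.1]))
  | @in_node1 c t t' pos a h ih =>
      intro pos' d hd
      cases pos' with
      | nil => simp [GTree.leafAt] at hd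
      | cons b p =>
          cases b
          · simp [GTree.leafAt] at hd
          · rcases ih p d hd with ⟨hne, h0⟩ | h0 | ⟨h0, h1⟩
            · exact Or.inl ⟨by simpa using hne, h0⟩
            · exact Or.inr (Or.inl (by simp [h0]))
            · exact Or.inr (Or.inr ⟨by simp [h0], h1⟩)
  | @in_node2_left c tl tl' tr pos a h ih =>
      intro pos' d hd
      cases pos' with
      | nil => simp [GTree.leafAt] at hd
      | cons b p =>
          cases b
          · rcases ih p d hd with ⟨hne, h0⟩ | h0 | ⟨h0, h1⟩
            · exact Or.inl ⟨by simpa using hne, h0⟩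
            · exact Or.inr (Or.inl (by simp [h0]))
            · exact Or.inr (Or.inr ⟨by simp [h0], h1⟩)
          · exact Or.inl ⟨by simp, hd⟩
  | @in_node2_right c tl tr tr' pos a h ih =>
      intro pos' d hd
      cases pos' with
      | nil => simp [GTree.leafAt] at hd
      | cons b p =>
          cases b
          · exact Or.inl ⟨by simp, hd⟩
          · rcases ih p d hd with ⟨hne, h0⟩ | h0 | ⟨h0, h1⟩
            · exact Or.inl ⟨by simpa using hne, h0⟩
            · exact Or.inr (Or.inl (by simp [h0]))
            · exact Or.inr (Or.inr ⟨by simp [h0], h1⟩)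

lemma label_persist {t t' : GTree (Conf P Γ L)} {pos : List Bool} {a : Act L}
    (h : ExpandA M f t t' pos a) :
    ∀ pos' d, t.label? pos' = some d → t'.label? pos' = some d := by
  induction h with
  | simple_tau h =>
      intro pos' d hd; rw [label?_leaf] at hd; rw [hd.1, hd.2]; rfl
  | simple_acq h hf =>
      intro pos' d hd; rw [label?_leaf] at hd; rw [hd.1, hd.2]; rfl
  | simple_rel h hl =>
      intro pos' d hd; rw [label?_leaf] at hd; rw [hd.1, hd.2]; rfl
  | spawn_tau h =>
      intro pos' d hd; rw [label?_leaf] at hd; rw [hd.1, hd.2]; rfl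
  | spawn_acq h hf =>
      intro pos' d hd; rw [label?_leaf] at hd; rw [hd.1, hd.2]; rfl
  | spawn_rel h hl =>
      intro pos' d hd; rw [label?_leaf] at hd; rw [hd.1, hd.2]; rfl
  | @in_node1 c t t' pos a h ih =>
      intro pos' d hd
      cases pos' with
      | nil => exact hd
      | cons b p =>
          cases b
          · simp [GTree.label?] at hd
          · exact ih p d hd
  | @in_node2_left c tl tl' tr pos a h ih =>
      intro pos' d hd
      cases pos' with
      | nil => exact hd
      | cons b p =>
          cases b
          · exact ih p d hd
          · exact hd
  | @in_node2_right c tl tr tr' pos a h ih =>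
      intro pos' d hd
      cases pos' with
      | nil => exact hd
      | cons b p =>
          cases b
          · exact hd
          · exact ih p d hd

lemma label_back {t t' : GTree (Conf P Γ L)} {pos : List Bool} {a : Act L}
    (h : ExpandA M f t t' pos a) :
    ∀ pos' d, t'.label? pos' = some d →
      t.label? pos' = some d ∨
      (pos' = pos ++ [true] ∧ t'.leafAt pos' = some d) ∨
      (pos' = pos ++ [false] ∧ t'.leafAt pos' = some d ∧ d.2.2 = ∅) := by
  induction h with
  | simple_tau h =>
      intro pos' d hd
      cases pos' with
      | nil => exact Or.inl hd
      | cons b p =>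
          cases b
          · simp [GTree.label?] at hd
          · rw [show (GTree.node1 _ (GTree.leaf _)).label? (true :: p)
                = (GTree.leaf _).label? p from rfl, label?_leaf] at hd
            refine Or.inr (Or.inl ⟨by simp [hd.1], ?_⟩)
            rw [hd.1, hd.2]; rfl
  | simple_acq h hf =>
      intro pos' d hd
      cases pos' with
      | nil => exact Or.inl hd
      | cons b p =>
          cases b
          · simp [GTree.label?] at hd
          · rw [show (GTree.node1 _ (GTree.leaf _)).label? (true :: p)
                = (GTree.leaf _).label? p from rfl, label?_leaf] at hd
            refine Or.inr (Or.inl ⟨by simp [hd.1], ?_⟩)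
            rw [hd.1, hd.2]; rfl
  | simple_rel h hl =>
      intro pos' d hd
      cases pos' with
      | nil => exact Or.inl hd
      | cons b p =>
          cases b
          · simp [GTree.label?] at hd
          · rw [show (GTree.node1 _ (GTree.leaf _)).label? (true :: p)
                = (GTree.leaf _).label? p from rfl, label?_leaf] at hd
            refine Or.inr (Or.inl ⟨by simp [hd.1], ?_⟩)
            rw [hd.1, hd.2]; rfl
  | spawn_tau h =>
      intro pos' d hd
      cases pos' with
      | nil => exact Or.inl hd
      | cons b p =>
          cases b
          · rw [show (GTree.node2 _ (GTree.leaf _) (GTree.leaf _)).label? (false :: p)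
                = (GTree.leaf _).label? p from rfl, label?_leaf] at hd
            refine Or.inr (Or.inr ⟨by simp [hd.1], ?_, by rw [hd.2]⟩)
            rw [hd.1, hd.2]; rfl
          · rw [show (GTree.node2 _ (GTree.leaf _) (GTree.leaf _)).label? (true :: p)
                = (GTree.leaf _).label? p from rfl, label?_leaf] at hd
            refine Or.inr (Or.inl ⟨by simp [hd.1], ?_⟩)
            rw [hd.1, hd.2]; rfl
  | spawn_acq h hf =>
      intro pos' d hd
      cases pos' with
      | nil => exact Or.inl hd
      | cons b p =>
          cases b
          · rw [show (GTree.node2 _ (GTree.leaf _) (GTree.leaf _)).label? (false :: p)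
                = (GTree.leaf _).label? p from rfl, label?_leaf] at hd
            refine Or.inr (Or.inr ⟨by simp [hd.1], ?_, by rw [hd.2]⟩)
            rw [hd.1, hd.2]; rfl
          · rw [show (GTree.node2 _ (GTree.leaf _) (GTree.leaf _)).label? (true :: p)
                = (GTree.leaf _).label? p from rfl, label?_leaf] at hd
            refine Or.inr (Or.inl ⟨by simp [hd.1], ?_⟩)
            rw [hd.1, hd.2]; rfl
  | spawn_rel h hl =>
      intro pos' d hd
      cases pos' with
      | nil => exact Or.inl hd
      | cons b p =>
          cases b
          · rw [show (GTree.node2 _ (GTree.leaf _) (GTree.leaf _)).label? (false :: p)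
                = (GTree.leaf _).label? p from rfl, label?_leaf] at hd
            refine Or.inr (Or.inr ⟨by simp [hd.1], ?_, by rw [hd.2]⟩)
            rw [hd.1, hd.2]; rfl
          · rw [show (GTree.node2 _ (GTree.leaf _) (GTree.leaf _)).label? (true :: p)
                = (GTree.leaf _).label? p from rfl, label?_leaf] at hd
            refine Or.inr (Or.inl ⟨by simp [hd.1], ?_⟩)
            rw [hd.1, hd.2]; rfl
  | @in_node1 c t t' pos a h ih =>
      intro pos' d hd
      cases pos' with
      | nil => exact Or.inl hd
      | cons b p =>
          cases b
          · simp [GTree.label?] at hd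
          · rcases ih p d hd with h0 | ⟨h0, h1⟩ | ⟨h0, h1, h2⟩
            · exact Or.inl h0
            · exact Or.inr (Or.inl ⟨by simp [h0], h1⟩)
            · exact Or.inr (Or.inr ⟨by simp [h0], h1, h2⟩)
  | @in_node2_left c tl tl' tr pos a h ih =>
      intro pos' d hd
      cases pos' with
      | nil => exact Or.inl hd
      | cons b p =>
          cases b
          · rcases ih p d hd with h0 | ⟨h0, h1⟩ | ⟨h0, h1, h2⟩
            · exact Or.inl h0
            · exact Or.inr (Or.inl ⟨by simp [h0], h1⟩)
            · exact Or.inr (Or.inr ⟨by simp [h0], h1, h2⟩)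
          · exact Or.inl hd
  | @in_node2_right c tl tr tr' pos a h ih =>
      intro pos' d hd
      cases pos' with
      | nil => exact Or.inl hd
      | cons b p =>
          cases b
          · exact Or.inl hd
          · rcases ih p d hd with h0 | ⟨h0, h1⟩ | ⟨h0, h1, h2⟩
            · exact Or.inl h0
            · exact Or.inr (Or.inl ⟨by simp [h0], h1⟩)
            · exact Or.inr (Or.inr ⟨by simp [h0], h1, h2⟩)

/-- Size of a tree (for showing expansion changes the tree). -/
def GTree.size {C : Type} : GTree C → ℕ
  | .leaf _ => 1
  | .node1 _ t => t.size + 1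
  | .node2 _ tl tr => tl.size + tr.size + 1

lemma expand_size {t t' : GTree (Conf P Γ L)} {pos : List Bool} {a : Act L}
    (h : ExpandA M f t t' pos a) : t.size < t'.size := by
  induction h <;> simp [GTree.size] <;> omega

lemma expand_pos_of_leaf {c : Conf P Γ L} {t' : GTree (Conf P Γ L)}
    {pos : List Bool} {a : Act L} (h : ExpandA M f (GTree.leaf c) t' pos a) : pos = [] := by
  cases h <;> rfl

lemma expand_pos_unique {t t' : GTree (Conf P Γ L)} {pos pos' : List Bool} {a a' : Act L}
    (h : ExpandA M f t t' pos a) (h' : ExpandA M f t t' pos' a') : pos = pos' := by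
  induction h generalizing pos' a' with
  | simple_tau _ => exact (expand_pos_of_leaf h').symm
  | simple_acq _ _ => exact (expand_pos_of_leaf h').symm
  | simple_rel _ _ => exact (expand_pos_of_leaf h').symm
  | spawn_tau _ => exact (expand_pos_of_leaf h').symm
  | spawn_acq _ _ => exact (expand_pos_of_leaf h').symm
  | spawn_rel _ _ => exact (expand_pos_of_leaf h').symm
  | @in_node1 c t t1 pos a h ih =>
      cases h' with
      | in_node1 h2 => rw [ih h2]
  | @in_node2_left c tl tl1 tr pos a h ih =>
      cases h' with
      | in_node2_left h2 => rw [ih h2]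
      | in_node2_right h2 => exact absurd (expand_size h) (lt_irrefl _)
  | @in_node2_right c tl tr tr1 pos a h ih =>
      cases h' with
      | in_node2_left h2 => exact absurd (expand_size h) (lt_irrefl _)
      | in_node2_right h2 => rw [ih h2]

end ExpandLemmas
lemma snoc_inj {α : Type} {xs ys : List α} {a b : α}
    (h : xs ++ [a] = ys ++ [b]) : xs = ys ∧ a = b := by
  have := congrArg List.reverse h
  simp only [List.reverse_append, List.reverse_cons, List.reverse_nil,
    List.nil_append, List.cons_append, List.cons.injEq] at this
  exact ⟨by simpa using congrArg List.reverse this.2, this.1⟩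

lemma not_free_of_held {P Γ L : Type} {t : GTree (Conf P Γ L)} {pos : List Bool}
    {c : Conf P Γ L} {l : L} (h : t.leafAt pos = some c) (hl : l ∈ c.2.2) :
    ¬ freeIn t l := fun hf => hf c (mem_leaves_iff.mpr ⟨pos, h⟩) hl

section RunLemmas

variable {n : ℕ} {P Γ L : Type} {M : LDPN n P Γ L} {c₀ : Conf P Γ L}
  (r : GlobalRun M c₀)

lemma step_cases (k : ℕ) :
    r.tr (k + 1) = r.tr k ∨ ∃ pos a, EventAt r k pos a := r.step k

lemma label_mono {k k' : ℕ} (hk : k ≤ k') {pos : List Bool} {c : Conf P Γ L}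
    (h : (r.tr k).label? pos = some c) : (r.tr k').label? pos = some c := by
  induction k', hk using Nat.le_induction with
  | base => exact h
  | succ k' hk ih =>
      rcases r.step k' with he | ⟨pos₀, a₀, he⟩
      · rw [he]; exact ih
      · exact label_persist he pos c ih

lemma label_unique {k k' : ℕ} {pos : List Bool} {c c' : Conf P Γ L}
    (h : (r.tr k).label? pos = some c) (h' : (r.tr k').label? pos = some c') :
    c = c' := by
  rcases le_total k k' with hk | hk
  · have := label_mono r hk h; rw [this] at h'; exact Option.some.inj h'
  · have := label_mono r hk h'; rw [this] at h; exact (Option.some.inj h).symm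

lemma tr_zero_label {pos : List Bool} {c : Conf P Γ L}
    (h : (r.tr 0).label? pos = some c) : pos = [] ∧ c = c₀ := by
  rw [r.init, label?_leaf] at h; exact h

lemma left_empty : ∀ (k : ℕ) (pos : List Bool) (c : Conf P Γ L),
    (r.tr k).label? (pos ++ [false]) = some c → c.2.2 = ∅ := by
  intro k
  induction k with
  | zero =>
      intro pos c h
      rcases tr_zero_label r h with ⟨h1, _⟩
      simp at h1
  | succ k ih =>
      intro pos c h
      rcases r.step k with he | ⟨pos₀, a₀, he⟩
      · rw [he] at h; exact ih pos c h
      · rcases label_back he _ c h with h0 | ⟨h0, _⟩ | ⟨h0, _, h2⟩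
        · exact ih pos c h0
        · rcases snoc_inj h0 with ⟨_, h1⟩; cases h1
        · exact h2

lemma was_leaf : ∀ (k : ℕ) (pos : List Bool) (c : Conf P Γ L),
    (r.tr k).label? pos = some c → ∃ k₁, (r.tr k₁).leafAt pos = some c := by
  intro k
  induction k with
  | zero =>
      intro pos c h
      rcases tr_zero_label r h with ⟨rfl, rfl⟩
      exact ⟨0, by rw [r.init]; rfl⟩
  | succ k ih =>
      intro pos c h
      rcases r.step k with he | ⟨pos₀, a₀, he⟩
      · rw [he] at h; exact ih pos c h
      · rcases label_back he _ c h with h0 | ⟨_, h1⟩ | ⟨_, h1, _⟩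
        · exact ih pos c h0
        · exact ⟨k + 1, h1⟩
        · exact ⟨k + 1, h1⟩

lemma event_core {k : ℕ} {pos : List Bool} {a : Act L} (h : EventAt r k pos a) :
    ∃ c c' : Conf P Γ L, (r.tr k).leafAt pos = some c ∧
      (r.tr (k+1)).leafAt (pos ++ [true]) = some c' ∧
      c'.2.2 = lockstep a c.2.2 ∧
      (∀ l, a = Act.acq l → freeIn (r.tr k) l) ∧
      (∀ l, a = Act.rel l → l ∈ c.2.2) := expand_core h

/-- At any instant, distinct leaves hold disjoint lock sets. -/
lemma disjoint_locks : ∀ (k : ℕ) (l : L) (p₁ p₂ : List Bool) (c₁ c₂ : Conf P Γ L),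
    (r.tr k).leafAt p₁ = some c₁ → (r.tr k).leafAt p₂ = some c₂ →
    l ∈ c₁.2.2 → l ∈ c₂.2.2 → p₁ = p₂ := by
  intro k
  induction k with
  | zero =>
      intro l p₁ p₂ c₁ c₂ h₁ h₂ _ _
      rw [r.init, leafAt_leaf] at h₁ h₂
      rw [h₁.1, h₂.1]
  | succ k ih =>
      intro l p₁ p₂ c₁ c₂ h₁ h₂ hl₁ hl₂
      rcases r.step k with he | ⟨pos₀, a₀, he⟩
      · rw [he] at h₁ h₂; exact ih l p₁ p₂ c₁ c₂ h₁ h₂ hl₁ hl₂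
      · obtain ⟨c, c', hc, hc', hstep, hacq, hrel⟩ := expand_core he
        -- helper facts for "new leaf at pos₀ ++ [true]" holding l
        have hnew : ∀ (p : List Bool) (d : Conf P Γ L),
            (r.tr (k+1)).leafAt p = some d → l ∈ d.2.2 →
            (p ≠ pos₀ ∧ (r.tr k).leafAt p = some d) ∨ (p = pos₀ ++ [true] ∧ l ∈ lockstep a₀ c.2.2) := by
          intro p d hp hl
          rcases expand_back he p d hp with h0 | h0 | ⟨h0, h2⟩
          · exact Or.inl h0
          · refine Or.inr ⟨h0, ?_⟩
            rw [h0] at hp; rw [hp] at hc'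
            rw [← hstep]; rw [← Option.some.inj hc']; exact hl
          · rw [h2] at hl; exact absurd hl (Set.notMem_empty l)
        rcases hnew p₁ c₁ h₁ hl₁ with ⟨hne₁, ho₁⟩ | ⟨rfl, hm₁⟩ <;>
          rcases hnew p₂ c₂ h₂ hl₂ with ⟨hne₂, ho₂⟩ | ⟨rfl, hm₂⟩
        · exact ih l p₁ p₂ c₁ c₂ ho₁ ho₂ hl₁ hl₂
        · -- p₁ old, p₂ new
          exfalso
          cases a₀ with
          | tau => exact hne₁ (ih l p₁ pos₀ c₁ c ho₁ hc hl₁ hm₂)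
          | acq l₀ =>
              rcases hm₂ with hm₂ | hm₂
              · exact hne₁ (ih l p₁ pos₀ c₁ c ho₁ hc hl₁ hm₂)
              · rw [Set.mem_singleton_iff] at hm₂; subst hm₂
                exact not_free_of_held ho₁ hl₁ (hacq l rfl)
          | rel l₀ => exact hne₁ (ih l p₁ pos₀ c₁ c ho₁ hc hl₁ hm₂.1)
        · -- p₁ new, p₂ old
          exfalso
          cases a₀ with
          | tau => exact hne₂ (ih l p₂ pos₀ c₂ c ho₂ hc hl₂ hm₁)
          | acq l₀ =>
              rcases hm₁ with hm₁ | hm₁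
              · exact hne₂ (ih l p₂ pos₀ c₂ c ho₂ hc hl₂ hm₁)
              · rw [Set.mem_singleton_iff] at hm₁; subst hm₁
                exact not_free_of_held ho₂ hl₂ (hacq l rfl)
          | rel l₀ => exact hne₂ (ih l p₂ pos₀ c₂ c ho₂ hc hl₂ hm₁.1)
        · rfl

lemma label_before_event {k k' : ℕ} {pos q : List Bool} {a : Act L} {d : Conf P Γ L}
    (h : EventAt r k pos a) (h' : (r.tr k').label? (pos ++ q) = some d)
    (hq : q ≠ []) : k < k' := by
  by_contra hc
  push_neg at hc
  obtain ⟨c, _, hcl, _, _, _, _⟩ := event_core r h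
  have := label_mono r hc h'
  rw [leafAt_no_below hcl q hq] at this
  cases this

lemma event_time_unique {k k' : ℕ} {pos : List Bool} {a a' : Act L}
    (h : EventAt r k pos a) (h' : EventAt r k' pos a') : k = k' := by
  by_contra hne
  rcases Nat.lt_or_ge k k' with hlt | hge
  · obtain ⟨c, c', _, hc', _, _, _⟩ := event_core r h
    have hl := label_mono r (show k + 1 ≤ k' by omega) (leafAt_label hc')
    exact absurd (label_before_event r h' (by exact hl) (by simp)) (by omega)
  · have hlt : k' < k := by omega
    obtain ⟨c, c', _, hc', _, _, _⟩ := event_core r h'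
    have hl := label_mono r (show k' + 1 ≤ k by omega) (leafAt_label hc')
    exact absurd (label_before_event r h (by exact hl) (by simp)) (by omega)

lemma event_determ {k : ℕ} {pos pos' : List Bool} {a a' : Act L}
    (h : EventAt r k pos a) (h' : EventAt r k pos' a') : pos = pos' ∧ a = a' := by
  have hp : pos = pos' := expand_pos_unique h h'
  subst hp
  refine ⟨rfl, ?_⟩
  obtain ⟨c, c', hc, hc', hstep, hacq, hrel⟩ := event_core r h
  obtain ⟨d, d', hd, hd', hstep', hacq', hrel'⟩ := event_core r h'
  rw [hc] at hd; rw [hc'] at hd'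
  have hcd := Option.some.inj hd
  have hcd' := Option.some.inj hd'
  subst hcd; subst hcd'
  have hss : lockstep a c.2.2 = lockstep a' c.2.2 := by rw [← hstep, hstep']
  have hfree : ∀ l : L, freeIn (r.tr k) l → l ∉ c.2.2 := by
    intro l hf
    exact fun hl => not_free_of_held hc hl hf
  cases a with
  | tau =>
      cases a' with
      | tau => rfl
      | acq l' =>
          exfalso
          have hl' : l' ∉ c.2.2 := hfree l' (hacq' l' rfl)
          have : l' ∈ lockstep (Act.acq l') c.2.2 := by simp [lockstep]
          rw [← hss] at this; exact hl' this
      | rel l' =>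
          exfalso
          have hl' : l' ∈ c.2.2 := hrel' l' rfl
          have : l' ∉ lockstep (Act.rel l') c.2.2 := by simp [lockstep]
          rw [← hss] at this; exact this hl'
  | acq l =>
      have hl : l ∉ c.2.2 := hfree l (hacq l rfl)
      cases a' with
      | tau =>
          exfalso
          have : l ∈ lockstep (Act.acq l) c.2.2 := by simp [lockstep]
          rw [hss] at this; exact hl this
      | acq l' =>
          have hl' : l' ∉ c.2.2 := hfree l' (hacq' l' rfl)
          have h1 : l ∈ lockstep (Act.acq l') c.2.2 := by
            rw [← hss]; simp [lockstep]
          rcases h1 with h1 | h1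
          · exact absurd h1 hl
          · rw [Set.mem_singleton_iff] at h1; rw [h1]
      | rel l' =>
          exfalso
          have : l ∈ lockstep (Act.rel l') c.2.2 := by rw [← hss]; simp [lockstep]
          exact hl this.1
  | rel l =>
      have hl : l ∈ c.2.2 := hrel l rfl
      cases a' with
      | tau =>
          exfalso
          have : l ∉ lockstep (Act.rel l) c.2.2 := by simp [lockstep]
          rw [hss] at this; exact this hl
      | acq l' =>
          exfalso
          have hl' : l' ∉ c.2.2 := hfree l' (hacq' l' rfl)
          have : l' ∈ lockstep (Act.acq l') c.2.2 := by simp [lockstep]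
          rw [← hss] at this
          exact hl' this.1
      | rel l' =>
          have hl' : l' ∈ c.2.2 := hrel' l' rfl
          have h1 : l' ∉ lockstep (Act.rel l') c.2.2 := by simp [lockstep]
          rw [← hss] at h1
          simp only [lockstep, Set.mem_diff, Set.mem_singleton_iff, not_and, not_not] at h1
          rw [h1 hl']

/-- Every non-root labelled node was created by an event at its parent. -/
lemma created : ∀ (k : ℕ) (pos : List Bool) (b : Bool) (d : Conf P Γ L),
    (r.tr k).label? (pos ++ [b]) = some d →
    ∃ (k' : ℕ) (a : Act L) (c : Conf P Γ L), k' < k ∧ EventAt r k' pos a ∧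
      (r.tr k').leafAt pos = some c ∧
      (r.tr (k'+1)).leafAt (pos ++ [b]) = some d ∧
      (b = true → d.2.2 = lockstep a c.2.2) ∧ (b = false → d.2.2 = ∅) := by
  intro k
  induction k with
  | zero =>
      intro pos b d h
      rcases tr_zero_label r h with ⟨h1, _⟩
      simp at h1
  | succ k ih =>
      intro pos b d h
      rcases r.step k with he | ⟨pos₀, a₀, he⟩
      · rw [he] at h
        obtain ⟨k', a, c, hk, rest⟩ := ih pos b d h
        exact ⟨k', a, c, by omega, rest⟩
      · rcases label_back he _ d h with h0 | ⟨h0, h1⟩ | ⟨h0, h1, h2⟩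
        · obtain ⟨k', a, c, hk, rest⟩ := ih pos b d h0
          exact ⟨k', a, c, by omega, rest⟩
        · rcases snoc_inj h0 with ⟨rfl, rfl⟩
          obtain ⟨c, c', hc, hc', hstep, _, _⟩ := expand_core he
          rw [h1] at hc'
          refine ⟨k, a₀, c, by omega, he, hc, h1, fun _ => ?_, by simp⟩
          rw [Option.some.inj hc', hstep]
        · rcases snoc_inj h0 with ⟨rfl, rfl⟩
          obtain ⟨c, _, hc, _, _, _, _⟩ := expand_core he
          exact ⟨k, a₀, c, by omega, he, hc, h1, by simp, fun _ => h2⟩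

end RunLemmas
section PosLemmas

lemma locpos_zero (q : List Bool) : locpos q 0 = q := List.append_nil q

lemma locpos_succ (q : List Bool) (m : ℕ) :
    locpos q (m + 1) = locpos q m ++ [true] := by
  show q ++ List.replicate (m+1) true = (q ++ List.replicate m true) ++ [true]
  rw [List.replicate_succ', List.append_assoc]

lemma locpos_add (q : List Bool) (m j : ℕ) :
    locpos q (m + j) = locpos q m ++ List.replicate j true := by
  show q ++ List.replicate (m + j) true = (q ++ List.replicate m true) ++ List.replicate j true
  rw [List.replicate_add, List.append_assoc]

lemma prefix_locpos (q : List Bool) (m : ℕ) : q <+: locpos q m :=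
  ⟨List.replicate m true, rfl⟩

lemma startIn_prefix {w q : List Bool} (h : LocalStartIn w q) : w <+: q := by
  rcases h with rfl | ⟨h, _⟩
  · exact List.prefix_refl _
  · exact h

lemma rep_false_inj : ∀ (m m' : ℕ) (x y : List Bool),
    List.replicate m true ++ false :: x = List.replicate m' true ++ false :: y →
    m = m' ∧ x = y := by
  intro m
  induction m with
  | zero =>
      intro m' x y h
      cases m' with
      | zero => simpa using h
      | succ m' => simp [List.replicate_succ] at h
  | succ m ih =>
      intro m' x y h
      cases m' with
      | zero => simp [List.replicate_succ] at h
      | succ m' =>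
          simp only [List.replicate_succ, List.cons_append, List.cons.injEq] at h
          obtain ⟨h1, h2⟩ := ih m' x y h.2
          exact ⟨by rw [h1], h2⟩

lemma startIn_locpos_inj {w q q' : List Bool} {m m' : ℕ}
    (hq : LocalStartIn w q) (hq' : LocalStartIn w q')
    (h : locpos q m = locpos q' m') : q = q' ∧ m = m' := by
  have key : ∀ (p p' : List Bool) (mm mm' : ℕ),
      p ++ false :: List.replicate mm true = p' ++ false :: List.replicate mm' true →
      p = p' ∧ mm = mm' := by
    intro p p' mm mm' hh
    have := congrArg List.reverse hh
    simp only [List.reverse_append, List.reverse_cons, List.reverse_replicate] at this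
    have h2 := rep_false_inj mm mm' p.reverse p'.reverse (by
      simpa [List.append_assoc] using this)
    constructor
    · have := congrArg List.reverse h2.2; simpa using this
    · exact h2.1
  -- helper: mixed case is impossible unless q' = w
  have mixed : ∀ (qq : List Bool) (mmm mm' : ℕ) (pre : List Bool), qq = pre ++ [false] →
      w <+: qq → locpos w mmm = locpos qq mm' → qq = w ∧ mmm = mm' := by
    intro qq mm mm' pre hpre hw hloc
    obtain ⟨s, hs⟩ := hw
    rcases List.eq_nil_or_concat s with rfl | ⟨s₀, x, rfl⟩
    · rw [List.append_nil] at hs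
      subst hs
      refine ⟨rfl, ?_⟩
      have := congrArg List.length hloc
      simpa [locpos] using this
    · exfalso
      have hx : x = false := by
        have : pre ++ [false] = (w ++ s₀) ++ [x] := by
          rw [← hpre, ← hs]; simp [List.concat_eq_append, List.append_assoc]
        exact (snoc_inj this).2.symm
      subst hx
      -- locpos w mm = w ++ s₀ ++ false :: replicate mm'
      have : List.replicate mm true = s₀ ++ false :: List.replicate mm' true := by
        have h1 : locpos qq mm' = w ++ (s₀ ++ false :: List.replicate mm' true) := by
          rw [← hs]; simp [locpos, List.concat_eq_append, List.append_assoc]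
        rw [h1] at hloc
        have h2 : w ++ List.replicate mm true
            = w ++ (s₀ ++ false :: List.replicate mm' true) := by
          simpa only [locpos] using hloc
        exact List.append_cancel_left h2
      have : (false : Bool) ∈ List.replicate mm true := by
        rw [this]; exact List.mem_append_right _ List.mem_cons_self
      simpa using List.eq_of_mem_replicate this
  rcases hq with rfl | ⟨hw, pre, rfl⟩
  · rcases hq' with rfl | ⟨hw', pre', rfl⟩
    · refine ⟨rfl, ?_⟩
      have := congrArg List.length h
      simpa [locpos] using this
    · obtain ⟨e1, e2⟩ := mixed _ m m' pre' rfl hw' h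
      exact ⟨e1.symm, e2⟩
  · rcases hq' with rfl | ⟨hw', pre', rfl⟩
    · obtain ⟨e1, e2⟩ := mixed _ m' m pre rfl hw h.symm
      exact ⟨e1, e2.symm⟩
    · have h1 : pre ++ false :: List.replicate m true
          = pre' ++ false :: List.replicate m' true := by
        simpa [locpos, List.append_assoc] using h
      obtain ⟨h2, h3⟩ := key _ _ _ _ h1
      exact ⟨by rw [h2], h3⟩

lemma cross_startIn_ne {v q q' : List Bool} {m m' : ℕ}
    (hq : LocalStartIn (v ++ [true]) q) (hq' : LocalStartIn (v ++ [false]) q') :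
    locpos q m ≠ locpos q' m' := by
  intro h
  have h1 : (v ++ [true]) <+: locpos q m :=
    (startIn_prefix hq).trans (prefix_locpos q m)
  have h2 : (v ++ [false]) <+: locpos q' m' :=
    (startIn_prefix hq').trans (prefix_locpos q' m')
  rw [← h] at h2
  obtain ⟨s1, hs1⟩ := h1
  obtain ⟨s2, hs2⟩ := h2
  rw [← hs1] at hs2
  simp only [List.append_assoc] at hs2
  have := List.append_cancel_left hs2
  simp only [List.singleton_append, List.cons.injEq] at this
  exact Bool.noConfusion this.1

end PosLemmas
section RunLocal

variable {n : ℕ} {P Γ L : Type} {M : LDPN n P Γ L} {c₀ : Conf P Γ L}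
  (r : GlobalRun M c₀)

lemma rep_ne_nil {j : ℕ} (hj : j ≠ 0) : (List.replicate j true : List Bool) ≠ [] := by
  cases j with
  | zero => omega
  | succ j => simp [List.replicate_succ]

lemma event_local_order {q : List Bool} {m m' k k' : ℕ} {a a' : Act L}
    (h : EventAt r k (locpos q m) a) (h' : EventAt r k' (locpos q m') a')
    (hm : m < m') : k < k' := by
  obtain ⟨c, _, hc, _, _, _, _⟩ := event_core r h'
  have heq : locpos q m' = locpos q m ++ List.replicate (m' - m) true := by
    rw [← locpos_add]; congr 1; omega
  rw [heq] at hc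
  exact label_before_event r h (leafAt_label hc)
    (rep_ne_nil (by omega))

lemma run_event_ge {q : List Bool} {k₀ : ℕ} {cq : Conf P Γ L}
    (hq0 : (r.tr k₀).leafAt q = some cq) {k m : ℕ} {a : Act L}
    (h : EventAt r k (locpos q m) a) : k₀ ≤ k := by
  by_contra hc
  push_neg at hc
  obtain ⟨c, c', hcl, hc', _, _, _⟩ := event_core r h
  cases m with
  | zero =>
      rw [locpos_zero] at hc'
      have := label_mono r (show k + 1 ≤ k₀ by omega) (leafAt_label hc')
      rw [leafAt_no_below hq0 [true] (by simp)] at this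
      cases this
  | succ m =>
      have := label_mono r (show k ≤ k₀ by omega) (leafAt_label hcl)
      rw [show locpos q (m+1) = q ++ List.replicate (m+1) true from rfl,
        leafAt_no_below hq0 _ (rep_ne_nil (Nat.succ_ne_zero m))] at this
      cases this

lemma not_held_of_no_acq {q : List Bool} {m₁ k₁ : ℕ} {c₁ : Conf P Γ L} {l : L}
    (h1 : (r.tr k₁).leafAt (locpos q m₁) = some c₁) (hl : l ∉ c₁.2.2) :
    ∀ m, m₁ ≤ m → (∀ m', m₁ ≤ m' → m' < m → ¬ EventAtPos r (locpos q m') (Act.acq l)) →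
    ∀ (k : ℕ) (c : Conf P Γ L), (r.tr k).leafAt (locpos q m) = some c → l ∉ c.2.2 := by
  intro m
  induction m using Nat.strong_induction_on with
  | _ m ih =>
      intro hm hnoacq k c hc
      rcases Nat.eq_or_lt_of_le hm with rfl | hlt
      · have : c₁ = c := label_unique r (leafAt_label h1) (leafAt_label hc)
        rw [← this]; exact hl
      · obtain ⟨m', rfl⟩ : ∃ m', m = m' + 1 := ⟨m - 1, by omega⟩
        have hm' : m₁ ≤ m' := by omega
        rw [locpos_succ] at hc
        obtain ⟨k', a, cp, hk', hev, hcp, hleaf, hlock, _⟩ :=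
          created r k (locpos q m') true c (leafAt_label hc)
        have hprev : l ∉ cp.2.2 :=
          ih m' (by omega) hm' (fun m'' h1 h2 => hnoacq m'' h1 (by omega)) k' cp hcp
        have hna : a ≠ Act.acq l := by
          rintro rfl
          exact hnoacq m' hm' (by omega) ⟨k', hev⟩
        rw [hlock rfl]
        cases a with
        | tau => exact hprev
        | acq l' =>
            intro hmem
            rcases hmem with hmem | hmem
            · exact hprev hmem
            · rw [Set.mem_singleton_iff] at hmem
              rw [hmem] at hna; exact hna rfl
        | rel l' => exact fun hmem => hprev hmem.1

lemma held_until {q : List Bool} {m₀ k₀ K : ℕ} {cs : Conf P Γ L} {l : L}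
    (h0 : (r.tr k₀).leafAt (locpos q m₀) = some cs) (hl : l ∈ cs.2.2)
    (hrel : ∀ k' m, k' < K → m₀ ≤ m → ¬ EventAt r k' (locpos q m) (Act.rel l)) :
    ∀ k, k₀ ≤ k → k ≤ K →
      ∃ m c, m₀ ≤ m ∧ (r.tr k).leafAt (locpos q m) = some c ∧ l ∈ c.2.2 := by
  intro k hk
  induction k, hk using Nat.le_induction with
  | base => exact fun _ => ⟨m₀, cs, le_refl _, h0, hl⟩
  | succ k hk ih =>
      intro hK
      obtain ⟨m, c, hm, hc, hcl⟩ := ih (by omega)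
      rcases r.step k with he | ⟨pos₀, a₀, he⟩
      · rw [he]; exact ⟨m, c, hm, hc, hcl⟩
      · by_cases hpos : pos₀ = locpos q m
        · subst hpos
          have hne : a₀ ≠ Act.rel l := fun h => hrel k m (by omega) hm (h ▸ he)
          obtain ⟨c2, c', hc2, hc', hstep, hacq, hrelc⟩ := event_core r he
          rw [hc] at hc2
          have hcc := Option.some.inj hc2
          refine ⟨m + 1, c', by omega, by rw [locpos_succ]; exact hc', ?_⟩
          rw [hstep, ← hcc]
          cases a₀ with
          | tau => exact hcl
          | acq l' => exact Or.inl hcl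
          | rel l' =>
              refine ⟨hcl, ?_⟩
              rw [Set.mem_singleton_iff]
              intro hll; rw [hll] at hne; exact hne rfl
        · exact ⟨m, c, hm, expand_preserve he _ _ ((fun h => hpos h.symm)) hc, hcl⟩

lemma held_forever {q : List Bool} {k₀ : ℕ} {cq : Conf P Γ L} {l : L}
    (hq0 : (r.tr k₀).leafAt q = some cq) (hl : l ∈ cq.2.2)
    (hni : ∀ k m, ¬ InitRelAt r q k m l) :
    ∀ k, k₀ ≤ k → ∃ m c, (r.tr k).leafAt (locpos q m) = some c ∧ l ∈ c.2.2 := by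
  intro k
  induction k using Nat.strong_induction_on with
  | _ k ih =>
      intro hk
      rcases Nat.eq_or_lt_of_le hk with rfl | hlt
      · exact ⟨0, cq, by rw [locpos_zero]; exact hq0, hl⟩
      · obtain ⟨k', rfl⟩ : ∃ k', k = k' + 1 := ⟨k - 1, by omega⟩
        have hk' : k₀ ≤ k' := by omega
        obtain ⟨m, c, hc, hcl⟩ := ih k' (by omega) hk'
        rcases r.step k' with he | ⟨pos₀, a₀, he⟩
        · rw [he]; exact ⟨m, c, hc, hcl⟩
        · by_cases hpos : pos₀ = locpos q m
          · subst hpos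
            have hne : a₀ ≠ Act.rel l := by
              rintro rfl
              refine hni k' m ⟨he, ?_⟩
              rintro m' hm' ⟨k'', hk''⟩
              have h1 : k₀ ≤ k'' := run_event_ge r hq0 hk''
              have h2 : k'' < k' := event_local_order r hk'' he hm'
              obtain ⟨mt1, ct1, h3, h4⟩ := ih k'' (by omega) h1
              obtain ⟨_, _, _, _, _, hacq, _⟩ := event_core r hk''
              exact not_free_of_held h3 h4 (hacq l rfl)
            obtain ⟨c2, c', hc2, hc', hstep, hacq, hrelc⟩ := event_core r he
            rw [hc] at hc2
            have hcc := Option.some.inj hc2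
            refine ⟨m + 1, c', by rw [locpos_succ]; exact hc', ?_⟩
            rw [hstep, ← hcc]
            cases a₀ with
            | tau => exact hcl
            | acq l' => exact Or.inl hcl
            | rel l' =>
                refine ⟨hcl, ?_⟩
                rw [Set.mem_singleton_iff]
                intro hll; rw [hll] at hne; exact hne rfl
          · exact ⟨m, c, expand_preserve he _ _ ((fun h => hpos h.symm)) hc, hcl⟩

/-- In a local run whose root holds no locks, there are no initial releases. -/
lemma no_initrel_false_start {pre q : List Bool} {k m : ℕ} {l : L}
    (hq : q = pre ++ [false]) : ¬ InitRelAt r q k m l := by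
  rintro ⟨hev, hnoacq⟩
  obtain ⟨c, _, hc, _, _, _, hrelc⟩ := event_core r hev
  have hlc : l ∈ c.2.2 := hrelc l rfl
  have hlabel : (r.tr k).label? (q ++ List.replicate m true) = some c := leafAt_label hc
  obtain ⟨cq, hcq⟩ := label?_prefix hlabel
  have hempty : cq.2.2 = ∅ := left_empty r k pre cq (by rw [← hq]; exact hcq)
  obtain ⟨k₁, hk₁⟩ := was_leaf r k q cq hcq
  have hnh := not_held_of_no_acq r (l := l)
      (show (r.tr k₁).leafAt (locpos q 0) = some cq by rw [locpos_zero]; exact hk₁)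
      (by rw [hempty]; exact Set.notMem_empty l)
      m (Nat.zero_le m) (fun m' _ hm' => hnoacq m' hm') k c hc
  exact hnh hlc

/-- An initially released lock is held at the root of the local run. -/
lemma initrel_root_held {q : List Bool} {k m kq : ℕ} {cq : Conf P Γ L} {l : L}
    (hk₁ : (r.tr kq).leafAt q = some cq) (h : InitRelAt r q k m l) : l ∈ cq.2.2 := by
  obtain ⟨hev, hnoacq⟩ := h
  obtain ⟨c, _, hc, _, _, _, hrelc⟩ := event_core r hev
  by_contra hcon
  exact not_held_of_no_acq r
      (show (r.tr kq).leafAt (locpos q 0) = some cq by rw [locpos_zero]; exact hk₁)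
      hcon m (Nat.zero_le m) (fun m' _ hm' => hnoacq m' hm') k c hc (hrelc l rfl)

end RunLocal
section Subtree

variable {n : ℕ} {P Γ L : Type} {M : LDPN n P Γ L} {c₀ : Conf P Γ L}
  (r : GlobalRun M c₀) {v : List Bool} {k_v : ℕ} {a_v : Act L} {c₁ : Conf P Γ L}

/-- Any event in the subtree rooted at a child of `v` happens after the spawn. -/
lemma event_in_subtree_gt (hv : EventAt r k_v v a_v)
    {b : Bool} {q : List Bool} {m k : ℕ} {a : Act L}
    (hq : LocalStartIn (v ++ [b]) q) (h : EventAt r k (locpos q m) a) :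
    k_v < k := by
  obtain ⟨s, hs⟩ := (startIn_prefix hq).trans (prefix_locpos q m)
  obtain ⟨c, _, hc, _, _, _, _⟩ := event_core r h
  have : (r.tr k).label? (v ++ (b :: s)) = some c := by
    rw [show v ++ (b :: s) = locpos q m by rw [← hs]; simp]
    exact leafAt_label hc
  exact label_before_event r hv this (by simp)


/-- Initial releases in the right subtree happen only on the main local run,
and only of locks held at its root. -/
lemma initrel_in_true_subtree
    (hc₁ : (r.tr (k_v + 1)).leafAt (v ++ [true]) = some c₁)
    {q : List Bool} {k m : ℕ} {l : L}
    (hq : LocalStartIn (v ++ [true]) q) (h : InitRelAt r q k m l) :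
    q = v ++ [true] ∧ l ∈ c₁.2.2 := by
  rcases hq with rfl | ⟨_, pre, rfl⟩
  · exact ⟨rfl, initrel_root_held r hc₁ h⟩
  · exact absurd h (no_initrel_false_start r rfl)

/-- If `l` is held at the root of the right subtree and never initially released
on the main run, then from the spawn on, the main run's leaf always holds `l`. -/
lemma x_held (hc₁ : (r.tr (k_v + 1)).leafAt (v ++ [true]) = some c₁) (l : L) (hl : l ∈ c₁.2.2)
    (hni : ∀ k m, ¬ InitRelAt r (v ++ [true]) k m l) :
    ∀ k, k_v + 1 ≤ k →
      ∃ m c, (r.tr k).leafAt (locpos (v ++ [true]) m) = some c ∧ l ∈ c.2.2 :=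
  held_forever r hc₁ hl hni

/-- No lock-`l` event at all in either subtree, for `l ∈ X₁ \ R₁`. -/
lemma x_blocked (hv : EventAt r k_v v a_v)
    (hc₁ : (r.tr (k_v + 1)).leafAt (v ++ [true]) = some c₁) (l : L) (hl : l ∈ c₁.2.2)
    (hni : ∀ k m, ¬ InitRelAt r (v ++ [true]) k m l) {b : Bool} {q₂ : List Bool}
    {k₂ m₂ : ℕ} {a : Act L} (hq₂ : LocalStartIn (v ++ [b]) q₂)
    (ha : a = Act.acq l ∨ (a = Act.rel l ∧ ¬ InitRelAt r q₂ k₂ m₂ l))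
    (h : EventAt r k₂ (locpos q₂ m₂) a) : False := by
  have hk₂ : k_v + 1 ≤ k₂ := event_in_subtree_gt r hv hq₂ h
  obtain ⟨mt, ct, hct, hctl⟩ := x_held r hc₁ l hl hni k₂ hk₂
  rcases ha with rfl | ⟨rfl, hnir⟩
  · obtain ⟨_, _, _, _, _, hacq, _⟩ := event_core r h
    exact not_free_of_held hct hctl (hacq l rfl)
  · -- a release of l in the subtree: it must be on the main run and initial
    obtain ⟨c₂, _, hc₂, _, _, _, hrelc⟩ := event_core r h
    have hpos : locpos q₂ m₂ = locpos (v ++ [true]) mt :=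
      disjoint_locks r k₂ l _ _ _ _ hc₂ hct (hrelc l rfl) hctl
    cases b with
    | false => exact cross_startIn_ne (Or.inl rfl) hq₂ hpos.symm
    | true =>
        obtain ⟨rfl, rfl⟩ := startIn_locpos_inj hq₂ (Or.inl rfl) hpos
        refine hnir ⟨h, ?_⟩
        rintro m' hm' ⟨k'', hk''⟩
        have h1 : k_v + 1 ≤ k'' :=
          event_in_subtree_gt r hv (Or.inl rfl) hk''
        have h2 : k'' < k₂ := event_local_order r hk'' h hm'
        obtain ⟨mt', ct', h3, h4⟩ := x_held r hc₁ l hl hni k'' h1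
        obtain ⟨_, _, _, _, _, hacq, _⟩ := event_core r hk''
        exact not_free_of_held h3 h4 (hacq l rfl)

/-- After a final acquisition, the acquiring run's leaf holds the lock forever. -/
lemma finacq_held {q : List Bool} {k m : ℕ} {l : L} (h : FinAcqAt r q k m l) :
    ∀ k', k + 1 ≤ k' →
      ∃ m' c, m + 1 ≤ m' ∧ (r.tr k').leafAt (locpos q m') = some c ∧ l ∈ c.2.2 := by
  intro k' hk'
  obtain ⟨hev, hnorel⟩ := h
  obtain ⟨c, c', hc, hc', hstep, _, _⟩ := event_core r hev
  refine held_until r (show (r.tr (k+1)).leafAt (locpos q (m+1)) = some c' by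
      rw [locpos_succ]; exact hc')
    (by rw [hstep]; exact Or.inr rfl)
    (fun k'' m'' _ hm'' hev'' => hnorel m'' (by omega) ⟨k'', hev''⟩) k' hk' (le_refl k')

/-- Any usage of `l` happens strictly before any final acquisition of `l`
(both anywhere in the two subtrees). -/
lemma usage_lt_finacq {b₁ b₂ : Bool} {q q₂ : List Bool} {k m k₂ m₂ : ℕ} {l : L}
    (hq : LocalStartIn (v ++ [b₁]) q) (hf : FinAcqAt r q k m l)
    (hq₂ : LocalStartIn (v ++ [b₂]) q₂) (hu : UsageAt r q₂ k₂ m₂ l) : k₂ < k := by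
  by_contra hc
  push_neg at hc  -- k ≤ k₂
  have hposne : ∀ (mm mm' : ℕ), locpos q mm = locpos q₂ mm' → b₁ = b₂ := by
    intro mm mm' hpp
    cases b₁ <;> cases b₂
    · rfl
    · exact absurd hpp.symm (cross_startIn_ne hq₂ hq)
    · exact absurd hpp (cross_startIn_ne hq hq₂)
    · rfl
  rcases Nat.eq_or_lt_of_le hc with heq | hlt
  · -- same instant: same event
    rcases hu with ⟨hu, hnf⟩ | ⟨hu, _⟩
    · rw [← heq] at hu
      obtain ⟨hp, ha⟩ := event_determ r hf.1 hu
      have hb : b₁ = b₂ := hposne m m₂ hp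
      subst hb
      obtain ⟨rfl, rfl⟩ := startIn_locpos_inj hq hq₂ hp
      rw [heq] at hf
      exact hnf hf
    · rw [← heq] at hu
      obtain ⟨hp, ha⟩ := event_determ r hf.1 hu
      cases ha
  · -- strictly after: l is held by the acquiring run forever
    obtain ⟨mt, ct, hmt, hct, hctl⟩ := finacq_held r hf k₂ (by omega)
    rcases hu with ⟨hu, _⟩ | ⟨hu, _⟩
    · obtain ⟨_, _, _, _, _, hacq, _⟩ := event_core r hu
      exact not_free_of_held hct hctl (hacq l rfl)
    · obtain ⟨c₂, _, hc₂, _, _, _, hrelc⟩ := event_core r hu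
      have hpos : locpos q₂ m₂ = locpos q mt :=
        disjoint_locks r k₂ l _ _ _ _ hc₂ hct (hrelc l rfl) hctl
      have hb : b₁ = b₂ := hposne mt m₂ hpos.symm
      subst hb
      obtain ⟨rfl, rfl⟩ := startIn_locpos_inj hq₂ hq hpos
      exact hf.2 m₂ (by omega) ⟨k₂, hu⟩

/-- Two final acquisitions of the same lock happen at the same instant. -/
lemma finacq_time_eq {q q₂ : List Bool} {k m k₂ m₂ : ℕ} {l : L}
    (hf : FinAcqAt r q k m l) (hf₂ : FinAcqAt r q₂ k₂ m₂ l) : k = k₂ := by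
  by_contra hne
  rcases Nat.lt_or_ge k k₂ with hlt | hge
  · obtain ⟨mt, ct, hmt, hct, hctl⟩ := finacq_held r hf k₂ (by omega)
    obtain ⟨_, _, _, _, _, hacq, _⟩ := event_core r hf₂.1
    exact not_free_of_held hct hctl (hacq l rfl)
  · have hlt : k₂ < k := by omega
    obtain ⟨mt, ct, hmt, hct, hctl⟩ := finacq_held r hf₂ k (by omega)
    obtain ⟨_, _, _, _, _, hacq, _⟩ := event_core r hf.1
    exact not_free_of_held hct hctl (hacq l rfl)

/-- Claim U: any usage of `l` in the right subtree happens strictly after any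
initial release of `l` there. -/
lemma initrel_lt_usage (hv : EventAt r k_v v a_v)
    (hc₁ : (r.tr (k_v + 1)).leafAt (v ++ [true]) = some c₁) {q q₂ : List Bool} {k m k₂ m₂ : ℕ} {l : L}
    (hq : LocalStartIn (v ++ [true]) q) (hir : InitRelAt r q k m l)
    (hq₂ : LocalStartIn (v ++ [true]) q₂) (hu : UsageAt r q₂ k₂ m₂ l) : k < k₂ := by
  obtain ⟨hq1, hl⟩ := initrel_in_true_subtree r hc₁ hq hir
  subst hq1
  -- l is held by the main run's leaf during [k_v+1, k]
  have hheld : ∀ kk, k_v + 1 ≤ kk → kk ≤ k →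
      ∃ mm c, 0 ≤ mm ∧ (r.tr kk).leafAt (locpos (v ++ [true]) mm) = some c ∧ l ∈ c.2.2 := by
    refine held_until r (show (r.tr (k_v+1)).leafAt (locpos (v ++ [true]) 0) = some c₁ by
        rw [locpos_zero]; exact hc₁) hl ?_
    intro k' m' hk' _ hev'
    rcases Nat.lt_trichotomy m' m with hmm | rfl | hmm
    · -- an earlier release of l: contradicts initial-ness of the one at m
      obtain ⟨cr, cr', hcr, hcr', hstep, _, _⟩ := event_core r hev'
      have hout : l ∉ cr'.2.2 := by rw [hstep]; exact fun hmem => hmem.2 rfl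
      obtain ⟨cm, _, hcm, _, _, _, hrelc⟩ := event_core r hir.1
      refine not_held_of_no_acq r
        (show (r.tr (k'+1)).leafAt (locpos (v ++ [true]) (m'+1)) = some cr' by
          rw [locpos_succ]; exact hcr') hout m (by omega)
        (fun m'' h1 h2 => hir.2 m'' h2) k cm hcm (hrelc l rfl)
    · exact absurd (event_time_unique r hev' hir.1) (by omega)
    · exact absurd (event_local_order r hir.1 hev' hmm) (by omega)
  by_contra hcon
  push_neg at hcon  -- k₂ ≤ k
  rcases hu with ⟨hu, _⟩ | ⟨hu, hnir⟩
  · have hk₂ : k_v + 1 ≤ k₂ := event_in_subtree_gt r hv hq₂ hu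
    obtain ⟨mt, ct, _, hct, hctl⟩ := hheld k₂ hk₂ hcon
    obtain ⟨_, _, _, _, _, hacq, _⟩ := event_core r hu
    exact not_free_of_held hct hctl (hacq l rfl)
  · have hk₂ : k_v + 1 ≤ k₂ := event_in_subtree_gt r hv hq₂ hu
    obtain ⟨mt, ct, _, hct, hctl⟩ := hheld k₂ hk₂ hcon
    obtain ⟨c₂, _, hc₂, _, _, _, hrelc⟩ := event_core r hu
    have hpos : locpos q₂ m₂ = locpos (v ++ [true]) mt :=
      disjoint_locks r k₂ l _ _ _ _ hc₂ hct (hrelc l rfl) hctl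
    obtain ⟨rfl, rfl⟩ := startIn_locpos_inj hq₂ (Or.inl rfl) hpos
    refine hnir ⟨hu, ?_⟩
    rintro m' hm' ⟨k'', hk''⟩
    have h1 : k_v + 1 ≤ k'' :=
      event_in_subtree_gt r hv (Or.inl rfl) hk''
    have h2 : k'' < k₂ := event_local_order r hk'' hu hm'
    obtain ⟨mt', ct', _, h3, h4⟩ := hheld k'' h1 (by omega)
    obtain ⟨_, _, _, _, _, hacq, _⟩ := event_core r hk''
    exact not_free_of_held h3 h4 (hacq l rfl)

/-- Two initial releases of the same lock in the right subtree happen at the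
same instant. -/
lemma initrel_time_eq
    (hc₁ : (r.tr (k_v + 1)).leafAt (v ++ [true]) = some c₁) {q q₂ : List Bool} {k m k₂ m₂ : ℕ} {l : L}
    (hq : LocalStartIn (v ++ [true]) q) (hir : InitRelAt r q k m l)
    (hq₂ : LocalStartIn (v ++ [true]) q₂) (hir₂ : InitRelAt r q₂ k₂ m₂ l) : k = k₂ := by
  obtain ⟨hq1, _⟩ := initrel_in_true_subtree r hc₁ hq hir
  obtain ⟨hq2, _⟩ := initrel_in_true_subtree r hc₁ hq₂ hir₂
  subst hq1; subst hq2
  have main : ∀ (kk mm kk₂ mm₂ : ℕ), InitRelAt r (v ++ [true]) kk mm l →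
      InitRelAt r (v ++ [true]) kk₂ mm₂ l → mm < mm₂ → False := by
    intro kk mm kk₂ mm₂ h1 h2 hmm
    obtain ⟨cr, cr', hcr, hcr', hstep, _, _⟩ := event_core r h1.1
    have hout : l ∉ cr'.2.2 := by rw [hstep]; exact fun hmem => hmem.2 rfl
    obtain ⟨cm, _, hcm, _, _, _, hrelc⟩ := event_core r h2.1
    exact not_held_of_no_acq r
      (show (r.tr (kk+1)).leafAt (locpos (v ++ [true]) (mm+1)) = some cr' by
        rw [locpos_succ]; exact hcr') hout mm₂ (by omega)
      (fun m'' _ h2' => h2.2 m'' h2') kk₂ cm hcm (hrelc l rfl)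
  rcases Nat.lt_trichotomy m m₂ with hmm | rfl | hmm
  · exact absurd (main k m k₂ m₂ hir hir₂ hmm) id
  · exact event_time_unique r hir.1 hir₂.1
  · exact absurd (main k₂ m₂ k m hir₂ hir hmm) id

end Subtree
/-- **Compatibility at spawn nodes (Statement 12).**
Let `T` be a global run of an L-DPN that uses locks in a nested style, and let
`v` be a node of `T` having both a right child and a left child (a spawned
instance).  Then the acquisition structures `as¹` and `as²` of the subtrees of
`T` rooted at the right child and at the left child are consistent and
`Compatible(as¹, as²)` holds. -/
theorem spawn_children_compatible :
    ∀ (n : ℕ) (P Γ L : Type) (M : LDPN n P Γ L), M.WF →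
    ∀ (c₀ : Conf P Γ L) (r : GlobalRun M c₀), NestedRun r →
    ∀ v : List Bool,
      (∃ c, InTree r (v ++ [true]) c) → (∃ c, InTree r (v ++ [false]) c) →
      ASConsistent (acqStructOf r (v ++ [true])) ∧
      ASConsistent (acqStructOf r (v ++ [false])) ∧
      ASCompatible (acqStructOf r (v ++ [true])) (acqStructOf r (v ++ [false])) := by
  intro n P Γ L M _hWF c₀ r _hnest v h1 _h2
  obtain ⟨c₁, k1, hlab1⟩ := h1
  obtain ⟨k_v, a_v, cv, _, hv, hcv, hc₁, _, _⟩ := created r k1 v true c₁ hlab1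
  set as₁ := acqStructOf r (v ++ [true]) with has₁
  set as₂ := acqStructOf r (v ++ [false]) with has₂
  -- basic emptiness facts about the left subtree
  have hX2 : as₂.X = ∅ := by
    rw [Set.eq_empty_iff_forall_notMem]
    rintro l ⟨c, ⟨k, hlabc⟩, hlc⟩
    rw [left_empty r k v c hlabc] at hlc
    exact hlc
  have hR2 : ∀ (q : List Bool) (k m : ℕ) (l : L),
      LocalStartIn (v ++ [false]) q → ¬ InitRelAt r q k m l := by
    intro q k m l hq
    rcases hq with rfl | ⟨_, pre, rfl⟩
    · exact no_initrel_false_start r rfl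
    · exact no_initrel_false_start r rfl
  -- the main blocking lemma for locks in X₁ \ R₁
  have husage1 : ∀ l, l ∈ c₁.2.2 → l ∉ as₁.R →
      ∀ (b : Bool) (q₂ : List Bool) (k₂ m₂ : ℕ), LocalStartIn (v ++ [b]) q₂ →
      ¬ UsageAt r q₂ k₂ m₂ l ∧ ¬ FinAcqAt r q₂ k₂ m₂ l := by
    intro l hl hnR b q₂ k₂ m₂ hq₂
    have hni : ∀ k m, ¬ InitRelAt r (v ++ [true]) k m l := by
      intro k m hir
      exact hnR ⟨v ++ [true], k, m, Or.inl rfl, hir⟩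
    constructor
    · rintro (⟨hu, _⟩ | ⟨hu, hnir⟩)
      · exact x_blocked r hv hc₁ l hl hni hq₂ (Or.inl rfl) hu
      · exact x_blocked r hv hc₁ l hl hni hq₂ (Or.inr ⟨rfl, hnir⟩) hu
    · rintro ⟨hu, _⟩
      exact x_blocked r hv hc₁ l hl hni hq₂ (Or.inl rfl) hu
  -- X₁ membership means membership in c₁'s locks
  have hX1 : ∀ l, l ∈ as₁.X → l ∈ c₁.2.2 := by
    rintro l ⟨c, ⟨k, hlabc⟩, hlc⟩
    rwa [label_unique r hlabc (leafAt_label hc₁)] at hlc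
  -- acyclicity of the union of the release graphs
  have hmono : ∀ (E F : Set (L × L)), E ⊆ F → RelAcyclic F → RelAcyclic E := by
    intro E F hEF hF l htg
    exact hF l (Relation.TransGen.mono (fun a b hab => hEF hab) l l htg)
  have hRHacyc : RelAcyclic (as₁.RH ∪ as₂.RH) := by
    have hedge : ∀ x y : L, (x, y) ∈ as₁.RH ∪ as₂.RH →
        ∃ ky, (∃ q m, LocalStartIn (v ++ [true]) q ∧ InitRelAt r q ky m y) ∧
          ∀ kx, (∃ q m, LocalStartIn (v ++ [true]) q ∧ InitRelAt r q kx m x) →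
            kx < ky := by
      intro x y hxy
      rcases hxy with hxy | hxy
      · obtain ⟨q, k, m, hq, hir, q₂, k₂, m₂, hq₂, hk₂, hu⟩ := hxy
        refine ⟨k, ⟨q, m, hq, hir⟩, ?_⟩
        rintro kx ⟨qx, mx, hqx, hirx⟩
        have := initrel_lt_usage r hv hc₁ hqx hirx hq₂ hu
        omega
      · obtain ⟨q, k, m, hq, hir, _⟩ := hxy
        exact absurd hir (hR2 q k m y hq)
    intro l htg
    have hchain : ∀ x y : L,
        Relation.TransGen (fun a b => (a, b) ∈ as₁.RH ∪ as₂.RH) x y →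
        ∃ ky, (∃ q m, LocalStartIn (v ++ [true]) q ∧ InitRelAt r q ky m y) ∧
          ∀ kx, (∃ q m, LocalStartIn (v ++ [true]) q ∧ InitRelAt r q kx m x) →
            kx < ky := by
      intro x y htg'
      induction htg' with
      | single h => exact hedge _ _ h
      | tail htg' h ih =>
          obtain ⟨ky, hy, hlt⟩ := ih
          obtain ⟨kz, hz, hlt'⟩ := hedge _ _ h
          exact ⟨kz, hz, fun kx hkx => lt_trans (hlt kx hkx) (hlt' ky hy)⟩
    obtain ⟨kl, hil, hlt⟩ := hchain l l htg
    exact lt_irrefl kl (hlt kl hil)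
  -- acyclicity of the union of the acquisition graphs
  have hAHacyc : RelAcyclic (as₁.AH ∪ as₂.AH) := by
    have hedge : ∀ x y : L, (x, y) ∈ as₁.AH ∪ as₂.AH →
        ∃ kx, (∃ q m, (LocalStartIn (v ++ [true]) q ∨ LocalStartIn (v ++ [false]) q) ∧
            FinAcqAt r q kx m x) ∧
          ∀ ky, (∃ q m, (LocalStartIn (v ++ [true]) q ∨ LocalStartIn (v ++ [false]) q) ∧
            FinAcqAt r q ky m y) → kx < ky := by
      intro x y hxy
      have main : ∀ (b : Bool), ((x, y) ∈ (acqStructOf r (v ++ [b])).AH) →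
          ∃ kx, (∃ q m, (LocalStartIn (v ++ [true]) q ∨ LocalStartIn (v ++ [false]) q) ∧
              FinAcqAt r q kx m x) ∧
            ∀ ky, (∃ q m, (LocalStartIn (v ++ [true]) q ∨ LocalStartIn (v ++ [false]) q) ∧
              FinAcqAt r q ky m y) → kx < ky := by
        intro b hb
        obtain ⟨q, k, m, hq, hfa, q₂, k₂, m₂, hq₂, hk₂, hu⟩ := hb
        refine ⟨k, ⟨q, m, by cases b; exact Or.inr hq; exact Or.inl hq, hfa⟩, ?_⟩
        rintro ky ⟨qy, my, hqy | hqy, hfay⟩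
        · have := usage_lt_finacq r hqy hfay hq₂ hu
          omega
        · have := usage_lt_finacq r hqy hfay hq₂ hu
          omega
      rcases hxy with hxy | hxy
      · exact main true hxy
      · exact main false hxy
    intro l htg
    have hchain : ∀ x y : L,
        Relation.TransGen (fun a b => (a, b) ∈ as₁.AH ∪ as₂.AH) x y →
        ∃ kx, (∃ q m, (LocalStartIn (v ++ [true]) q ∨ LocalStartIn (v ++ [false]) q) ∧
            FinAcqAt r q kx m x) ∧
          ∀ ky, (∃ q m, (LocalStartIn (v ++ [true]) q ∨ LocalStartIn (v ++ [false]) q) ∧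
            FinAcqAt r q ky m y) → kx < ky := by
      intro x y htg'
      induction htg' with
      | single h => exact hedge _ _ h
      | tail htg' h ih =>
          obtain ⟨kx, hx, hlt⟩ := ih
          obtain ⟨ky', hy', hlt'⟩ := hedge _ _ h
          exact ⟨kx, hx, fun kz hkz => lt_trans (hlt ky' hy') (hlt' kz hkz)⟩
    obtain ⟨kl, hil, hlt⟩ := hchain l l htg
    exact lt_irrefl kl (hlt kl hil)
  refine ⟨⟨?_, ?_, ?_⟩, ⟨?_, ?_, ?_⟩, ?_, ?_, ?_, ?_, ?_, ?_⟩
  · exact hmono _ _ Set.subset_union_left hRHacyc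
  · exact hmono _ _ Set.subset_union_left hAHacyc
  · -- (X₁ \ R₁) ∩ (U₁ ∪ A₁) = ∅
    rw [Set.eq_empty_iff_forall_notMem]
    rintro l ⟨⟨hX, hR⟩, hUA⟩
    have hl := hX1 l hX
    rcases hUA with ⟨q, k, m, hq, hu⟩ | ⟨q, k, m, hq, hu⟩
    · exact (husage1 l hl hR true q k m hq).1 hu
    · exact (husage1 l hl hR true q k m hq).2 hu
  · -- RelAcyclic as₂.RH : no edges at all
    intro l htg
    cases htg with
    | single h =>
        obtain ⟨q, k, m, hq, hir, _⟩ := h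
        exact hR2 q k m l hq hir
    | tail _ h =>
        obtain ⟨q, k, m, hq, hir, _⟩ := h
        exact hR2 q k m l hq hir
  · exact hmono _ _ Set.subset_union_right hAHacyc
  · rw [hX2]; simp
  · rw [hX2]; simp
  · -- (A₁ ∪ (X₁ \ R₁)) ∩ (A₂ ∪ (X₂ \ R₂)) = ∅
    rw [hX2]
    rw [Set.eq_empty_iff_forall_notMem]
    rintro l ⟨hl1, hl2⟩
    have hA2 : l ∈ as₂.A := by
      rcases hl2 with hl2 | hl2
      · exact hl2
      · exact absurd hl2.1 (Set.notMem_empty l)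
    obtain ⟨q₂, k₂, m₂, hq₂, hfa₂⟩ := hA2
    rcases hl1 with hA1 | ⟨hX, hR⟩
    · obtain ⟨q, k, m, hq, hfa⟩ := hA1
      have hk : k = k₂ := finacq_time_eq r hfa hfa₂
      rw [hk] at hfa
      have := (event_determ r hfa.1 hfa₂.1).1
      exact cross_startIn_ne hq hq₂ this
    · exact (husage1 l (hX1 l hX) hR false q₂ k₂ m₂ hq₂).2 hfa₂
  · exact hRHacyc
  · exact hAHacyc
  · rw [hX2]; simp
  · -- (A₂ ∪ U₂) ∩ (X₁ \ R₁) = ∅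
    rw [Set.eq_empty_iff_forall_notMem]
    rintro l ⟨hl2, hX, hR⟩
    have hl := hX1 l hX
    rcases hl2 with ⟨q, k, m, hq, hu⟩ | ⟨q, k, m, hq, hu⟩
    · exact (husage1 l hl hR false q k m hq).2 hu
    · exact (husage1 l hl hR false q k m hq).1 hu

end DPNFormal
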